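/- arXiv:1604.04849 — 3 statements merged into one kernel-verified Lean document; each statement's English description precedes it below -/
import Mathlib

section
/- For a finite index set E, product Bernoulli measure P_p on Ω = {0,1}^E with density p ∈ [0,1], and an increasing event A ⊆ Ω, the function p ↦ P_p(A) is differentiable on (0,1) and its derivative equals the sum over e ∈ E of P_p(e is pivotal for A), where e is pivotal for A in configuration ω if exactly one of ω with e set to 1 and ω with e set to 0 lies in A. -/
open Finset

variable {E : Type*}

/-- `upd ω e b` is the configuration `ω` with coordinate `e` set to `b`. -/
def upd (ω : E → Bool) (e : E) (b : Bool) [DecidableEq E] : E → Bool :=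
  fun f => if f = e then b else ω f

/-- An event `A ⊆ {0,1}^E` is increasing (an upper set for the coordinatewise order). -/
def IncrEvent (A : Set (E → Bool)) : Prop :=
  ∀ ⦃ω ω' : E → Bool⦄, ω ≤ ω' → ω ∈ A → ω' ∈ A

/-- `Pr p A` : the probability of the event `A ⊆ {0,1}^E` under product Bernoulli(p) measure. -/
noncomputable def Pr [Fintype E] (p : ℝ) (A : Set (E → Bool)) : ℝ := by
  classical exact
    ∑ ω : E → Bool, if ω ∈ A then ∏ e : E, (if ω e then p else 1 - p) else 0

section aux
variable [DecidableEq E]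

lemma upd_apply_ne (ω : E → Bool) (e f : E) (b : Bool) (h : f ≠ e) : upd ω e b f = ω f := by
  simp [upd, h]

lemma upd_apply_self (ω : E → Bool) (e : E) (b : Bool) : upd ω e b e = b := by
  simp [upd]

lemma upd_self (ω : E → Bool) (e : E) : upd ω e (ω e) = ω := by
  funext f; by_cases h : f = e <;> simp [upd, h]

lemma upd_upd (ω : E → Bool) (e : E) (b c : Bool) : upd (upd ω e b) e c = upd ω e c := by
  funext f; by_cases h : f = e <;> simp [upd, h]

lemma upd_le_upd (ω : E → Bool) (e : E) : upd ω e false ≤ upd ω e true := by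
  intro f
  by_cases h : f = e <;> simp [upd, h]

/-- Pairing lemma: summing over all configurations twice equals summing over the
two `e`-flips of each configuration. -/
lemma pair_sum [Fintype E] (e : E) (F : (E → Bool) → ℝ) :
    (2 : ℝ) * ∑ ω : E → Bool, F ω
      = ∑ ω : E → Bool, (F (upd ω e true) + F (upd ω e false)) := by
  have hinv : Function.Involutive (fun ω : E → Bool => upd ω e (!ω e)) := by
    intro ω
    simp only [upd_upd, upd_apply_self, Bool.not_not, upd_self]
  have hperm : ∑ ω : E → Bool, F (upd ω e (!ω e)) = ∑ ω : E → Bool, F ω :=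
    Fintype.sum_bijective _ hinv.bijective _ F (fun ω => rfl)
  calc (2 : ℝ) * ∑ ω : E → Bool, F ω
      = (∑ ω : E → Bool, F (upd ω e (!ω e))) + ∑ ω : E → Bool, F ω := by
        rw [hperm]; ring
    _ = ∑ ω : E → Bool, (F (upd ω e (!ω e)) + F ω) := by rw [← Finset.sum_add_distrib]
    _ = ∑ ω : E → Bool, (F (upd ω e true) + F (upd ω e false)) := by
        refine Finset.sum_congr rfl fun ω _ => ?_
        cases h : ω e with
        | false =>
            have h0 : upd ω e false = ω := by rw [← h]; exact upd_self ω e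
            simp only [h, Bool.not_false, h0]
        | true =>
            have h1 : upd ω e true = ω := by rw [← h]; exact upd_self ω e
            simp only [h, Bool.not_true, h1]
            ring

end aux

/-- **Russo's formula**: for an increasing event `A`, `p ↦ P_p(A)` is differentiable on `(0,1)`
with derivative the sum over `e` of the probability that `e` is pivotal for `A`. -/
theorem russo_formula [Fintype E] [DecidableEq E] (A : Set (E → Bool)) (hA : IncrEvent A)
    (p : ℝ) (hp : p ∈ Set.Ioo (0 : ℝ) 1) :
    HasDerivAt (fun q => Pr q A)
      (∑ e : E, Pr p {ω | upd ω e false ∉ A ∧ upd ω e true ∈ A}) p := by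
  classical
  set w : Bool → ℝ := fun b => if b then p else 1 - p with hw
  set d : Bool → ℝ := fun b => if b then 1 else -1 with hd
  -- Step 1: derivative computation
  have hderiv : HasDerivAt (fun q => Pr q A)
      (∑ ω : E → Bool, (if ω ∈ A then (1:ℝ) else 0) *
        ∑ e : E, (∏ f ∈ Finset.univ.erase e, w (ω f)) * d (ω e)) p := by
    have h1 : (fun q => Pr q A) = fun q => ∑ ω : E → Bool,
        (if ω ∈ A then (1:ℝ) else 0) * ∏ e : E, (if ω e then q else 1 - q) := by
      funext q
      unfold Pr
      refine Finset.sum_congr ?_ fun ω _ => ?_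
      · congr 1 <;> exact Subsingleton.elim _ _
      · by_cases h : ω ∈ A <;> simp [h]
    rw [h1]
    apply HasDerivAt.fun_sum
    intro ω _
    apply HasDerivAt.const_mul
    have := HasDerivAt.fun_finsetProd (u := Finset.univ)
      (f := fun e q => if ω e then q else 1 - q) (f' := fun e => d (ω e)) (x := p)
      (fun e _ => by
        by_cases h : ω e
        · simpa [h, hd] using hasDerivAt_id' p
        · simpa [h, hd] using ((hasDerivAt_id p).const_sub 1))
    simpa [smul_eq_mul, hw] using this
  -- Step 2: identify the derivative with the sum of pivotal probabilities
  have hkey : ∀ e : E,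
      (∑ ω : E → Bool, (if ω ∈ A then (1:ℝ) else 0) *
        ((∏ f ∈ Finset.univ.erase e, w (ω f)) * d (ω e)))
      = Pr p {ω | upd ω e false ∉ A ∧ upd ω e true ∈ A} := by
    intro e
    apply mul_left_cancel₀ (two_ne_zero (α := ℝ))
    rw [pair_sum e, show Pr p {ω | upd ω e false ∉ A ∧ upd ω e true ∈ A}
      = ∑ ω : E → Bool, (if (upd ω e false ∉ A ∧ upd ω e true ∈ A) then (1:ℝ) else 0) *
          ∏ f : E, w (ω f) from by
        unfold Pr
        refine Finset.sum_congr ?_ fun ω _ => ?_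
        · congr 1 <;> exact Subsingleton.elim _ _
        · by_cases h : (upd ω e false ∉ A ∧ upd ω e true ∈ A) <;> simp [h, hw]]
    rw [pair_sum e]
    apply Finset.sum_congr rfl
    intro ω _
    have hprodT : ∀ b : Bool, (∏ f ∈ Finset.univ.erase e, w (upd ω e b f))
        = ∏ f ∈ Finset.univ.erase e, w (ω f) := by
      intro b
      apply Finset.prod_congr rfl
      intro f hf
      rw [upd_apply_ne ω e f b (Finset.ne_of_mem_erase hf)]
    have hsplit : ∀ b : Bool, (∏ f : E, w (upd ω e b f))
        = w b * ∏ f ∈ Finset.univ.erase e, w (ω f) := by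
      intro b
      rw [← Finset.mul_prod_erase Finset.univ _ (Finset.mem_univ e), upd_apply_self, hprodT]
    have hpivinv : ∀ b : Bool,
        (upd (upd ω e b) e false ∉ A ∧ upd (upd ω e b) e true ∈ A)
          ↔ (upd ω e false ∉ A ∧ upd ω e true ∈ A) := by
      intro b; rw [upd_upd, upd_upd]
    have hmono : upd ω e false ∈ A → upd ω e true ∈ A := hA (upd_le_upd ω e)
    -- indicator difference equals pivotal indicator
    have hbracket : (if upd ω e true ∈ A then (1:ℝ) else 0)
        - (if upd ω e false ∈ A then (1:ℝ) else 0)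
        = (if (upd ω e false ∉ A ∧ upd ω e true ∈ A) then (1:ℝ) else 0) := by
      by_cases h1 : upd ω e false ∈ A
      · simp [h1, hmono h1]
      · by_cases h2 : upd ω e true ∈ A <;> simp [h1, h2]
    have dt : d true = 1 := rfl
    have df : d false = -1 := rfl
    have wt : w true = p := rfl
    have wf : w false = 1 - p := rfl
    simp only [upd_upd, upd_apply_self, hprodT, hsplit, dt, df, wt, wf]
    rw [← hbracket]
    ring
  -- Conclude
  have hfinal : (∑ ω : E → Bool, (if ω ∈ A then (1:ℝ) else 0) *
        ∑ e : E, (∏ f ∈ Finset.univ.erase e, w (ω f)) * d (ω e))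
      = ∑ e : E, Pr p {ω | upd ω e false ∉ A ∧ upd ω e true ∈ A} := by
    simp_rw [Finset.mul_sum]
    rw [Finset.sum_comm]
    exact Finset.sum_congr rfl fun e _ => hkey e
  rw [← hfinal]
  exact hderiv
end

section
/- Suppose f : (0,1) → [0,1] is differentiable, satisfies f'(p) ≥ c·f(p)(1 − f(p))·log(1/η) for all p ∈ (0,1), where c > 0 and η ∈ (0,1), and f(p₀) = 1/2 for some p₀ ∈ (0,1). Then for all p ∈ (0,1): f(p) ≤ 1/(1 + (1/η)^{c|p − p₀|}) if p < p₀, and f(p) ≥ 1 − 1/(1 + (1/η)^{c|p − p₀|}) if p > p₀. -/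
lemma logit_grow (f f' : ℝ → ℝ) (K a b : ℝ) (hab : a ≤ b)
    (hd : ∀ x ∈ Set.Icc a b, HasDerivAt f (f' x) x)
    (hpos : ∀ x ∈ Set.Icc a b, 0 < f x) (hlt : ∀ x ∈ Set.Icc a b, f x < 1)
    (hineq : ∀ x ∈ Set.Icc a b, f' x ≥ K * (f x * (1 - f x))) :
    (Real.log (f a) - Real.log (1 - f a)) + K * (b - a)
      ≤ Real.log (f b) - Real.log (1 - f b) := by
  set g : ℝ → ℝ := fun x => Real.log (f x) - Real.log (1 - f x) - K * x with hg
  have hgd : ∀ x ∈ Set.Icc a b,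
      HasDerivAt g (f' x / f x + f' x / (1 - f x) - K) x := by
    intro x hx
    have h1 : HasDerivAt (fun x => Real.log (f x)) (f' x / f x) x :=
      (hd x hx).log (hpos x hx).ne'
    have h2 : HasDerivAt (fun x => 1 - f x) (-(f' x)) x := by
      simpa using (hd x hx).const_sub (1:ℝ)
    have h3 : HasDerivAt (fun x => Real.log (1 - f x)) (-(f' x) / (1 - f x)) x :=
      h2.log (by linarith [hlt x hx])
    have h4 : HasDerivAt (fun x => K * x) K x := by
      simpa using (hasDerivAt_id x).const_mul K
    have := (h1.sub h3).sub h4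
    exact this.congr_deriv (by ring)
  have hmono : MonotoneOn g (Set.Icc a b) := by
    apply monotoneOn_of_deriv_nonneg (convex_Icc a b)
    · exact fun x hx => (hgd x hx).continuousAt.continuousWithinAt
    · intro x hx
      rw [interior_Icc] at hx
      exact (hgd x (Set.mem_Icc_of_Ioo hx)).differentiableAt.differentiableWithinAt
    · intro x hx
      rw [interior_Icc] at hx
      have hx' := Set.mem_Icc_of_Ioo hx
      rw [(hgd x hx').deriv]
      have hf := hpos x hx'
      have hf1 : 0 < 1 - f x := by linarith [hlt x hx']
      have h := hineq x hx'
      have e1 : K * (1 - f x) ≤ f' x / f x := by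
        rw [le_div_iff₀ hf]; nlinarith
      have e2 : K * f x ≤ f' x / (1 - f x) := by
        rw [le_div_iff₀ hf1]; nlinarith
      nlinarith
  have := hmono (Set.left_mem_Icc.2 hab) (Set.right_mem_Icc.2 hab) hab
  simp only [hg] at this
  linarith

/-- Integrating the logistic differential inequality
`f' ≥ c f (1−f) log(1/η)` with `f(p₀) = 1/2` yields the quantitative threshold bounds
`f(p) ≤ 1/(1+(1/η)^{c|p−p₀|})` for `p < p₀` and
`f(p) ≥ 1 − 1/(1+(1/η)^{c|p−p₀|})` for `p > p₀`. -/
theorem logistic_threshold (f f' : ℝ → ℝ) (c η : ℝ) (hc : 0 < c) (hη : η ∈ Set.Ioo (0 : ℝ) 1)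
    (hrange : ∀ p ∈ Set.Ioo (0 : ℝ) 1, f p ∈ Set.Icc (0 : ℝ) 1)
    (hderiv : ∀ p ∈ Set.Ioo (0 : ℝ) 1, HasDerivAt f (f' p) p)
    (hineq : ∀ p ∈ Set.Ioo (0 : ℝ) 1, f' p ≥ c * f p * (1 - f p) * Real.log (1 / η))
    (p₀ : ℝ) (hp₀ : p₀ ∈ Set.Ioo (0 : ℝ) 1) (hf₀ : f p₀ = 1 / 2) :
    ∀ p ∈ Set.Ioo (0 : ℝ) 1,
      (p < p₀ → f p ≤ 1 / (1 + (1 / η) ^ (c * |p - p₀|))) ∧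
      (p > p₀ → f p ≥ 1 - 1 / (1 + (1 / η) ^ (c * |p - p₀|))) := by
  obtain ⟨hη0, hη1⟩ := hη
  set k := Real.log (1 / η) with hkdef
  have hk : 0 < k := Real.log_pos (by rw [lt_div_iff₀ hη0]; linarith)
  -- monotonicity of f on (0,1)
  have hmono : MonotoneOn f (Set.Ioo (0:ℝ) 1) := by
    apply monotoneOn_of_deriv_nonneg (convex_Ioo 0 1)
    · exact fun x hx => (hderiv x hx).continuousAt.continuousWithinAt
    · intro x hx
      rw [interior_Ioo] at hx
      exact (hderiv x hx).differentiableAt.differentiableWithinAt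
    · intro x hx
      rw [interior_Ioo] at hx
      rw [(hderiv x hx).deriv]
      have h := hineq x hx
      obtain ⟨h0, h1⟩ := hrange x hx
      nlinarith [mul_nonneg (mul_nonneg (mul_nonneg hc.le h0)
        (by linarith : (0:ℝ) ≤ 1 - f x)) hk.le]
  intro p hp
  have hXpos : (0:ℝ) < (1 / η) ^ (c * |p - p₀|) :=
    Real.rpow_pos_of_pos (by positivity) _
  have hXval : (1 / η) ^ (c * |p - p₀|) = Real.exp (c * k * |p - p₀|) := by
    rw [Real.rpow_def_of_pos (by positivity), ← hkdef]; ring_nf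
  constructor
  · -- p < p₀
    intro hlt
    have habs : |p - p₀| = p₀ - p := by rw [abs_of_neg (by linarith)]; ring
    by_cases hfp : 0 < f p
    · have hsub : Set.Icc p p₀ ⊆ Set.Ioo (0:ℝ) 1 := fun x hx =>
        ⟨lt_of_lt_of_le hp.1 hx.1, lt_of_le_of_lt hx.2 hp₀.2⟩
      have key := logit_grow f f' (c * k) p p₀ hlt.le
        (fun x hx => hderiv x (hsub hx))
        (fun x hx => lt_of_lt_of_le hfp (hmono hp (hsub hx) hx.1))
        (fun x hx => by
          have := hmono (hsub hx) hp₀ hx.2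
          rw [hf₀] at this; linarith)
        (fun x hx => by have := hineq x (hsub hx); nlinarith)
      rw [hf₀] at key
      norm_num at key
      -- key : log (f p) - log (1 - f p) + c*k*(p₀ - p) ≤ 0
      have hfp1 : f p < 1 := by
        have := hmono hp hp₀ hlt.le; rw [hf₀] at this; linarith
      have h1f : 0 < 1 - f p := by linarith
      have hratio : f p / (1 - f p) ≤ Real.exp (-(c * k * (p₀ - p))) := by
        have : Real.log (f p) - Real.log (1 - f p) ≤ -(c * k * (p₀ - p)) := by linarith
        calc f p / (1 - f p) = Real.exp (Real.log (f p) - Real.log (1 - f p)) := by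
              rw [Real.exp_sub, Real.exp_log hfp, Real.exp_log h1f]
          _ ≤ _ := Real.exp_le_exp.2 this
      rw [hXval, habs]
      have hE : 0 < Real.exp (c * k * (p₀ - p)) := Real.exp_pos _
      rw [le_div_iff₀ (by positivity)]
      rw [div_le_iff₀ h1f] at hratio
      have hEmul : Real.exp (-(c * k * (p₀ - p))) * Real.exp (c * k * (p₀ - p)) = 1 := by
        rw [← Real.exp_add]; simp
      nlinarith [mul_le_mul_of_nonneg_right hratio hE.le]
    · push_neg at hfp
      have : (0:ℝ) < 1 / (1 + (1 / η) ^ (c * |p - p₀|)) := by positivity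
      linarith
  · -- p > p₀
    intro hgt
    have habs : |p - p₀| = p - p₀ := abs_of_pos (by linarith)
    by_cases hfp : f p < 1
    · have hsub : Set.Icc p₀ p ⊆ Set.Ioo (0:ℝ) 1 := fun x hx =>
        ⟨lt_of_lt_of_le hp₀.1 hx.1, lt_of_le_of_lt hx.2 hp.2⟩
      have key := logit_grow f f' (c * k) p₀ p hgt.le
        (fun x hx => hderiv x (hsub hx))
        (fun x hx => by
          have := hmono hp₀ (hsub hx) hx.1
          rw [hf₀] at this; linarith)
        (fun x hx => lt_of_le_of_lt (hmono (hsub hx) hp hx.2) hfp)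
        (fun x hx => by have := hineq x (hsub hx); nlinarith)
      rw [hf₀] at key
      norm_num at key
      have hfp0 : 0 < f p := by
        have := hmono hp₀ hp hgt.le; rw [hf₀] at this; linarith
      have h1f : 0 < 1 - f p := by linarith
      have hratio : Real.exp (c * k * (p - p₀)) ≤ f p / (1 - f p) := by
        have hlog : c * k * (p - p₀) ≤ Real.log (f p) - Real.log (1 - f p) := by linarith
        calc Real.exp (c * k * (p - p₀))
            ≤ Real.exp (Real.log (f p) - Real.log (1 - f p)) := Real.exp_le_exp.2 hlog
          _ = f p / (1 - f p) := by rw [Real.exp_sub, Real.exp_log hfp0, Real.exp_log h1f]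
      rw [ge_iff_le, hXval, habs]
      have hE : 0 < Real.exp (c * k * (p - p₀)) := Real.exp_pos _
      rw [le_div_iff₀ h1f] at hratio
      have h2 : 1 - f p ≤ 1 / (1 + Real.exp (c * k * (p - p₀))) := by
        rw [le_div_iff₀ (by positivity)]; nlinarith
      linarith
    · push_neg at hfp
      have h1 : 0 < (1 / η) ^ (c * |p - p₀|) := hXpos
      have : 0 < 1 / (1 + (1 / η) ^ (c * |p - p₀|)) := by positivity
      have hle := (hrange p hp).2
      linarith [this]
end

section
/- (Burton–Keane trifurcation bound.) Let μ be a translation-invariant probability measure on {0,1}^{E(ℤ^d)} with the finite-energy property. Then μ-almost surely the number of infinite open clusters is not in {2, 3, …} ∪ {∞ with trifurcations}; specifically, the expected number of trifurcation points in a box [−n,n]^d is at most the number of boundary vertices of the box, hence the density of trifurcation points is zero. -/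
open MeasureTheory
open scoped ENNReal

/-- Vertices of the hypercubic lattice `ℤ^d`. -/
abbrev Vd (d : ℕ) := Fin d → ℤ

/-- Edges of `ℤ^d`: the edge `(x, i)` joins `x` to `x + eᵢ`. -/
abbrev Ed (d : ℕ) := Vd d × Fin d

/-- The `i`-th unit vector of `ℤ^d`. -/
def unitv {d : ℕ} (i : Fin d) : Vd d := fun j => if j = i then 1 else 0

/-- `x` and `y` are joined by an open edge in the bond configuration `ω`. -/
def EdgeOpen {d : ℕ} (ω : Ed d → Bool) (x y : Vd d) : Prop :=
  ∃ i : Fin d, (y = x + unitv i ∧ ω (x, i) = true) ∨ (x = y + unitv i ∧ ω (y, i) = true)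

/-- `x` is joined to `y` by an open path. -/
def OpenConn {d : ℕ} (ω : Ed d → Bool) : Vd d → Vd d → Prop :=
  Relation.ReflTransGen (EdgeOpen ω)

/-- The open cluster of the vertex `x`. -/
def Cluster {d : ℕ} (ω : Ed d → Bool) (x : Vd d) : Set (Vd d) := {y | OpenConn ω x y}

/-- `P` is a product Bernoulli(p) measure: every finite cylinder has the product probability. -/
def BernoulliCyl {ι : Type*} [MeasurableSpace (ι → Bool)] (p : ℝ) (P : Measure (ι → Bool)) : Prop :=
  ∀ (S : Finset ι) (b : ι → Bool),
    P {ω | ∀ i ∈ S, ω i = b i} = ENNReal.ofReal (∏ i ∈ S, if b i then p else 1 - p)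

/-- The configuration obtained from `ω` by closing all edges incident to the vertex `x`. -/
noncomputable def closeAt {d : ℕ} (ω : Ed d → Bool) (x : Vd d) : Ed d → Bool := by
  classical exact fun e => if e.1 = x ∨ e.1 + unitv e.2 = x then false else ω e

/-- `x` is a trifurcation of `ω`: it lies in an infinite open cluster, and closing the
edges at `x` splits this cluster into at least three distinct infinite clusters. -/
def Trifurcation {d : ℕ} (ω : Ed d → Bool) (x : Vd d) : Prop :=
  (Cluster ω x).Infinite ∧
    ∃ y₁ y₂ y₃ : Vd d, y₁ ∈ Cluster ω x ∧ y₂ ∈ Cluster ω x ∧ y₃ ∈ Cluster ω x ∧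
      (Cluster (closeAt ω x) y₁).Infinite ∧ (Cluster (closeAt ω x) y₂).Infinite ∧
      (Cluster (closeAt ω x) y₃).Infinite ∧
      Cluster (closeAt ω x) y₁ ≠ Cluster (closeAt ω x) y₂ ∧
      Cluster (closeAt ω x) y₁ ≠ Cluster (closeAt ω x) y₃ ∧
      Cluster (closeAt ω x) y₂ ≠ Cluster (closeAt ω x) y₃

section BasicLemmas

variable {d : ℕ}

attribute [local instance] Classical.propDecidable

lemma edgeOpen_symm {ω : Ed d → Bool} {x y : Vd d} (h : EdgeOpen ω x y) : EdgeOpen ω y x := by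
  obtain ⟨i, h | h⟩ := h
  · exact ⟨i, Or.inr h⟩
  · exact ⟨i, Or.inl h⟩

lemma openConn_refl (ω : Ed d → Bool) (x : Vd d) : OpenConn ω x x := Relation.ReflTransGen.refl

lemma openConn_trans {ω : Ed d → Bool} {x y z : Vd d} (h : OpenConn ω x y)
    (h' : OpenConn ω y z) : OpenConn ω x z := h.trans h'

lemma openConn_symm {ω : Ed d → Bool} {x y : Vd d} (h : OpenConn ω x y) : OpenConn ω y x := by
  induction h with
  | refl => exact Relation.ReflTransGen.refl
  | tail _ he ih => exact Relation.ReflTransGen.head (edgeOpen_symm he) ih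

lemma cluster_eq_of_openConn {ω : Ed d → Bool} {x y : Vd d} (h : OpenConn ω x y) :
    Cluster ω y = Cluster ω x := by
  ext z
  exact ⟨fun hz => h.trans hz, fun hz => (openConn_symm h).trans hz⟩

lemma cluster_eq_iff {ω : Ed d → Bool} {x y : Vd d} :
    Cluster ω x = Cluster ω y ↔ OpenConn ω x y := by
  constructor
  · intro h
    have : y ∈ Cluster ω y := openConn_refl ω y
    rw [← h] at this; exact this
  · intro h; exact (cluster_eq_of_openConn h).symm

/-- endpoints of an edge open in `closeAt ω s` avoid `s`, and the edge is open in `ω`. -/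
lemma edgeOpen_closeAt {ω : Ed d → Bool} {s a b : Vd d} (h : EdgeOpen (closeAt ω s) a b) :
    EdgeOpen ω a b ∧ a ≠ s ∧ b ≠ s := by
  obtain ⟨i, ⟨hb, ho⟩ | ⟨hb, ho⟩⟩ := h
  · unfold closeAt at ho
    simp only at ho
    split at ho
    · exact absurd ho (by simp)
    · next hcond =>
      push_neg at hcond
      refine ⟨⟨i, Or.inl ⟨hb, ho⟩⟩, hcond.1, ?_⟩
      rw [hb]; exact hcond.2
  · unfold closeAt at ho
    simp only at ho
    split at ho
    · exact absurd ho (by simp)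
    · next hcond =>
      push_neg at hcond
      refine ⟨⟨i, Or.inr ⟨hb, ho⟩⟩, ?_, hcond.1⟩
      rw [hb]; exact hcond.2

/-- an ω-open edge avoiding `s` is open in `closeAt ω s`. -/
lemma edgeOpen_closeAt_of {ω : Ed d → Bool} {s a b : Vd d} (h : EdgeOpen ω a b)
    (ha : a ≠ s) (hb : b ≠ s) : EdgeOpen (closeAt ω s) a b := by
  obtain ⟨i, ⟨he, ho⟩ | ⟨he, ho⟩⟩ := h
  · refine ⟨i, Or.inl ⟨he, ?_⟩⟩
    unfold closeAt
    simp only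
    rw [if_neg, ho]
    push_neg
    exact ⟨ha, by rw [← he]; exact hb⟩
  · refine ⟨i, Or.inr ⟨he, ?_⟩⟩
    unfold closeAt
    simp only
    rw [if_neg, ho]
    push_neg
    exact ⟨hb, by rw [← he]; exact ha⟩

lemma openConn_of_closeAt {ω : Ed d → Bool} {s a b : Vd d}
    (h : OpenConn (closeAt ω s) a b) : OpenConn ω a b :=
  Relation.ReflTransGen.mono (r := EdgeOpen (closeAt ω s)) (p := EdgeOpen ω)
    (fun _ _ he => (edgeOpen_closeAt he).1) _ _ h

lemma cluster_closeAt_self (ω : Ed d → Bool) (s : Vd d) : Cluster (closeAt ω s) s = {s} := by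
  ext z
  simp only [Set.mem_singleton_iff, Cluster, Set.mem_setOf_eq]
  constructor
  · intro h
    induction h with
    | refl => rfl
    | tail _ he ih =>
      subst ih
      exact absurd rfl (edgeOpen_closeAt he).2.1
  · rintro rfl; exact openConn_refl _ _

/-- branch decomposition: any point of the cluster of `t` other than `t` is connected,
in `closeAt ω t`, to a neighbour of `t`. -/
lemma exists_branch {ω : Ed d → Bool} {t z : Vd d} (h : OpenConn ω t z) (hz : z ≠ t) :
    ∃ w, EdgeOpen ω t w ∧ OpenConn (closeAt ω t) w z := by
  induction h with
  | refl => exact absurd rfl hz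
  | @tail b c hab he ih =>
    by_cases hb : b = t
    · subst hb
      exact ⟨c, he, openConn_refl _ _⟩
    · obtain ⟨w, hw, hconn⟩ := ih hb
      exact ⟨w, hw, hconn.tail (edgeOpen_closeAt_of he hb hz)⟩

/-- transfer: a `closeAt ω t`-connection whose cluster avoids `s` is a `closeAt ω s`-connection. -/
lemma openConn_transfer {ω : Ed d → Bool} {t s a b : Vd d}
    (h : OpenConn (closeAt ω t) a b) (hs : s ∉ Cluster (closeAt ω t) a) :
    OpenConn (closeAt ω s) a b := by
  induction h with
  | refl => exact openConn_refl _ _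
  | @tail c e hab he ih =>
    have hce : OpenConn (closeAt ω t) a c := hab
    have hae : OpenConn (closeAt ω t) a e := hab.tail he
    have hc : c ≠ s := fun h => hs (h ▸ hce)
    have he' : e ≠ s := fun h => hs (h ▸ hae)
    exact (ih).tail (edgeOpen_closeAt_of (edgeOpen_closeAt he).1 hc he')

end BasicLemmas

section Geometry

variable {d : ℕ}

lemma edge_coord_diff {ω : Ed d → Bool} {a b : Vd d} (h : EdgeOpen ω a b) (j : Fin d) :
    |b j - a j| ≤ 1 := by
  obtain ⟨i, ⟨he, -⟩ | ⟨he, -⟩⟩ := h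
  · subst he
    simp only [Pi.add_apply, add_sub_cancel_left, unitv]
    split <;> simp
  · subst he
    simp only [Pi.add_apply, sub_add_cancel_left]
    simp only [unitv]
    split <;> simp

lemma edge_box_succ {ω : Ed d → Bool} {t w : Vd d} {m : ℕ} (h : EdgeOpen ω t w)
    (ht : ∀ i, |t i| ≤ (m : ℤ)) (i : Fin d) : |w i| ≤ (m : ℤ) + 1 := by
  have h1 := edge_coord_diff h i
  have h2 := ht i
  have : |w i| ≤ |t i| + |w i - t i| := by
    calc |w i| = |t i + (w i - t i)| := by ring_nf
    _ ≤ |t i| + |w i - t i| := abs_add_le _ _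
  omega

lemma cross_shell {ω : Ed d → Bool} {x y : Vd d} {m : ℕ} (hx : ∀ i, |x i| ≤ (m : ℤ))
    (hy : ¬ ∀ i, |y i| ≤ (m : ℤ)) (h : OpenConn ω x y) :
    ∃ z, (∀ i, |z i| ≤ (m : ℤ)) ∧ (∃ i, |z i| = (m : ℤ)) ∧ OpenConn ω x z := by
  induction h with
  | refl => exact absurd hx hy
  | @tail c e hxc he ih =>
    by_cases hc : ∀ i, |c i| ≤ (m : ℤ)
    · push_neg at hy
      obtain ⟨j, hj⟩ := hy
      refine ⟨c, hc, ⟨j, ?_⟩, hxc⟩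
      have h1 := edge_coord_diff he j
      have h2 := hc j
      have h3 := abs_sub_abs_le_abs_sub (e j) (c j)
      omega
    · exact ih hc

lemma box_set_finite (d m : ℕ) : {x : Vd d | ∀ i, |x i| ≤ (m : ℤ)}.Finite := by
  have : {x : Vd d | ∀ i, |x i| ≤ (m : ℤ)} ⊆ Set.pi Set.univ (fun _ => Set.Icc (-(m : ℤ)) m) := by
    intro x hx
    simp only [Set.mem_pi, Set.mem_univ, Set.mem_Icc, forall_true_left]
    intro i
    exact abs_le.mp (hx i)
  exact (Set.Finite.pi (fun _ => Set.finite_Icc _ _)).subset this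

lemma infinite_exits {S : Set (Vd d)} (hS : S.Infinite) (m : ℕ) :
    ∃ p ∈ S, ¬ ∀ i, |p i| ≤ (m : ℤ) := by
  by_contra h
  push_neg at h
  exact hS ((box_set_finite d m).subset (fun p hp => by
    simp only [Set.mem_setOf_eq]
    exact h p hp))

lemma cluster_meets_shell {ω : Ed d → Bool} {w : Vd d} {m : ℕ} (hw : ∀ i, |w i| ≤ (m : ℤ))
    (hinf : (Cluster ω w).Infinite) :
    ∃ z, (∀ i, |z i| ≤ (m : ℤ)) ∧ (∃ i, |z i| = (m : ℤ)) ∧ OpenConn ω w z := by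
  obtain ⟨p, hp, hpout⟩ := infinite_exits hinf m
  exact cross_shell hw hpout hp

end Geometry

section Abstract

variable {α : Type*} [DecidableEq α]

/-- `P` is a partition of the finite set `Y` into nonempty parts. -/
def IsPartn (Y : Finset α) (P : Finset (Finset α)) : Prop :=
  (∀ A ∈ P, A.Nonempty) ∧ (∀ A ∈ P, A ⊆ Y) ∧ (∀ y ∈ Y, ∃ A ∈ P, y ∈ A) ∧
  (∀ A ∈ P, ∀ B ∈ P, A ≠ B → ∀ x ∈ A, x ∉ B)

/-- Burton–Keane compatibility of two partitions. -/
def Compat (Y : Finset α) (P Q : Finset (Finset α)) : Prop :=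
  ∃ B ∈ P, ∃ B' ∈ Q, Y \ B ⊆ B'

lemma partn_sum_card {Y : Finset α} {P : Finset (Finset α)} (h : IsPartn Y P) :
    ∑ A ∈ P, A.card = Y.card := by
  obtain ⟨hne, hsub, hcov, hdisj⟩ := h
  have hY : Y = P.biUnion (fun A => A) := by
    ext y
    simp only [Finset.mem_biUnion]
    exact ⟨fun hy => hcov y hy, fun ⟨A, hA, hyA⟩ => hsub A hA hyA⟩
  rw [hY, Finset.card_biUnion (fun A hA B hB hAB =>
    Finset.disjoint_left.mpr (fun {x} hx => hdisj A hA B hB hAB x hx))]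

lemma parts_subset {Y : Finset α} {Q : Finset (Finset α)} {A B : Finset α}
    (hpart : IsPartn Y Q) (hB : B ∈ Q) (hYB : Y \ B ⊆ A) :
    ∀ C ∈ Q, C ≠ B → C ⊆ A := by
  intro C hC hCB x hx
  have hxY : x ∈ Y := hpart.2.1 C hC hx
  have hxB : x ∉ B := hpart.2.2.2 C hC B hB hCB x hx
  exact hYB (Finset.mem_sdiff.mpr ⟨hxY, hxB⟩)

theorem bk_abstract (N : ℕ) : ∀ (Y : Finset α) (F : Finset (Finset (Finset α))),
    Y.card ≤ N →
    (∀ P ∈ F, IsPartn Y P) → (∀ P ∈ F, 3 ≤ P.card) →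
    (∀ P ∈ F, ∀ Q ∈ F, P ≠ Q → Compat Y P Q) →
    F.Nonempty → F.card + 2 ≤ Y.card := by
  induction N with
  | zero =>
    intro Y F hYN hpart h3 _ hne
    obtain ⟨P, hP⟩ := hne
    have hcard := h3 P hP
    obtain ⟨A, hA⟩ := Finset.card_pos.mp (by omega : 0 < P.card)
    obtain ⟨a, ha⟩ := (hpart P hP).1 A hA
    have : a ∈ Y := (hpart P hP).2.1 A hA ha
    have : 0 < Y.card := Finset.card_pos.mpr ⟨a, this⟩
    omega
  | succ N IH =>
    intro Y F hYN hpart h3 hcompat hne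
    classical
    obtain ⟨P, hPF⟩ := hne
    set rest := F.erase P with hrest
    -- choose, for each Q in rest, a part B of Q and a part A of P with Y \ B ⊆ A
    have hex : ∀ Q ∈ rest, ∃ B, B ∈ Q ∧ ∃ A, A ∈ P ∧ Y \ B ⊆ A := by
      intro Q hQ
      have hQF : Q ∈ F := Finset.mem_of_mem_erase hQ
      have hQP : Q ≠ P := Finset.ne_of_mem_erase hQ
      obtain ⟨B, hB, A, hA, hYBA⟩ := hcompat Q hQF P hPF hQP
      exact ⟨B, hB, A, hA, hYBA⟩
    choose! fB hfB fA hfA hfYBA using hex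
    have hfiber : rest.card = ∑ A ∈ P, (rest.filter fun Q => fA Q = A).card :=
      Finset.card_eq_sum_card_fiberwise (fun Q hQ => hfA Q hQ)
    -- key bound for each part A of P
    have key : ∀ A ∈ P, (rest.filter fun Q => fA Q = A).card + 1 ≤ A.card := by
      intro A hAP
      set G := rest.filter fun Q => fA Q = A with hG
      have hAne : A.Nonempty := (hpart P hPF).1 A hAP
      rcases G.eq_empty_or_nonempty with hGe | hGne
      · rw [hGe]
        simpa using Finset.card_pos.mpr hAne
      -- pick y⋆ outside A (in another part A'), and a third part A'' to bound cards
      obtain ⟨A', hA'P, hA'ne⟩ := Finset.exists_mem_ne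
        (show 1 < P.card by have := h3 P hPF; omega) A
      obtain ⟨ys, hys⟩ := (hpart P hPF).1 A' hA'P
      have hysY : ys ∈ Y := (hpart P hPF).2.1 A' hA'P hys
      have hysA : ys ∉ A := fun h => (hpart P hPF).2.2.2 A' hA'P A hAP hA'ne ys hys h
      -- third part gives |A| + 2 ≤ |Y|
      have hcard2 : A.card + 2 ≤ Y.card := by
        have h2 : A' ∈ P.erase A := Finset.mem_erase.mpr ⟨hA'ne, hA'P⟩
        have h3' : 1 ≤ ((P.erase A).erase A').card := by
          rw [Finset.card_erase_of_mem h2, Finset.card_erase_of_mem hAP]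
          have := h3 P hPF; omega
        obtain ⟨A'', hA''⟩ := Finset.card_pos.mp
          (show 0 < ((P.erase A).erase A').card by omega)
        have hA''P : A'' ∈ P := Finset.mem_of_mem_erase (Finset.mem_of_mem_erase hA'')
        have hA''A : A'' ≠ A := (Finset.mem_erase.mp (Finset.mem_of_mem_erase hA'')).1
        have hA''A' : A'' ≠ A' := (Finset.mem_erase.mp hA'').1
        obtain ⟨a2, ha2⟩ := (hpart P hPF).1 A'' hA''P
        have ha2Y : a2 ∈ Y := (hpart P hPF).2.1 A'' hA''P ha2
        have ha2A : a2 ∉ A := fun h => (hpart P hPF).2.2.2 A'' hA''P A hAP hA''A a2 ha2 h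
        have ha2ys : a2 ≠ ys := by
          intro h
          exact (hpart P hPF).2.2.2 A'' hA''P A' hA'P hA''A' a2 ha2 (h ▸ hys)
        have hsub : insert a2 (insert ys A) ⊆ Y := by
          intro x hx
          simp only [Finset.mem_insert] at hx
          rcases hx with rfl | rfl | hx
          · exact ha2Y
          · exact hysY
          · exact (hpart P hPF).2.1 A hAP hx
        have := Finset.card_le_card hsub
        rw [Finset.card_insert_of_notMem (by
              simp only [Finset.mem_insert]
              push_neg
              exact ⟨ha2ys, ha2A⟩),
            Finset.card_insert_of_notMem hysA] at this
        omega
      -- facts about members of G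
      have hGfacts : ∀ Q ∈ G, Q ∈ F ∧ fB Q ∈ Q ∧ Y \ fB Q ⊆ A := by
        intro Q hQ
        rw [hG, Finset.mem_filter] at hQ
        obtain ⟨hQr, hQA⟩ := hQ
        exact ⟨Finset.mem_of_mem_erase hQr, hfB Q hQr, hQA ▸ hfYBA Q hQr⟩
      -- the collapse map
      set Y' : Finset α := insert ys A with hY'
      set ind : Finset (Finset α) → Finset (Finset α) :=
        fun Q => insert (insert ys (fB Q ∩ A)) (Q.erase (fB Q)) with hind
      -- basic facts about ind Q
      have hNmem : ∀ Q ∈ G, insert ys (fB Q ∩ A) ∉ Q.erase (fB Q) := by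
        intro Q hQ hmem
        obtain ⟨hQF, hBQ, hYBA⟩ := hGfacts Q hQ
        have hsubA : insert ys (fB Q ∩ A) ⊆ A := by
          refine parts_subset (hpart Q hQF) hBQ hYBA _ (Finset.mem_of_mem_erase hmem)
            (Finset.ne_of_mem_erase hmem)
        exact hysA (hsubA (Finset.mem_insert_self _ _))
      have hBrec : ∀ Q ∈ G, fB Q = (fB Q ∩ A) ∪ (Y \ A) := by
        intro Q hQ
        obtain ⟨hQF, hBQ, hYBA⟩ := hGfacts Q hQ
        ext x
        simp only [Finset.mem_union, Finset.mem_inter, Finset.mem_sdiff]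
        constructor
        · intro hx
          by_cases hxA : x ∈ A
          · exact Or.inl ⟨hx, hxA⟩
          · exact Or.inr ⟨(hpart Q hQF).2.1 _ hBQ hx, hxA⟩
        · rintro (⟨hx, -⟩ | ⟨hxY, hxA⟩)
          · exact hx
          · by_contra hxB
            exact hxA (hYBA (Finset.mem_sdiff.mpr ⟨hxY, hxB⟩))
      have hindcard : ∀ Q ∈ G, (ind Q).card = Q.card := by
        intro Q hQ
        obtain ⟨hQF, hBQ, hYBA⟩ := hGfacts Q hQ
        simp only [hind]
        rw [Finset.card_insert_of_notMem (hNmem Q hQ), Finset.card_erase_of_mem hBQ]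
        have : 0 < Q.card := Finset.card_pos.mpr ⟨fB Q, hBQ⟩
        omega
      have hindpartn : ∀ Q ∈ G, IsPartn Y' (ind Q) := by
        intro Q hQ
        obtain ⟨hQF, hBQ, hYBA⟩ := hGfacts Q hQ
        have hothers := parts_subset (hpart Q hQF) hBQ hYBA
        simp only [hind, hY']
        refine ⟨?_, ?_, ?_, ?_⟩
        · intro C hC
          simp only [Finset.mem_insert] at hC
          rcases hC with rfl | hC
          · exact ⟨ys, Finset.mem_insert_self _ _⟩
          · exact (hpart Q hQF).1 _ (Finset.mem_of_mem_erase hC)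
        · intro C hC
          simp only [Finset.mem_insert] at hC
          rcases hC with rfl | hC
          · intro x hx
            rcases Finset.mem_insert.mp hx with rfl | hx
            · exact Finset.mem_insert_self _ _
            · exact Finset.mem_insert_of_mem (Finset.mem_inter.mp hx).2
          · intro x hx
            exact Finset.mem_insert_of_mem
              (hothers _ (Finset.mem_of_mem_erase hC) (Finset.ne_of_mem_erase hC) hx)
        · intro y hy
          rcases Finset.mem_insert.mp hy with rfl | hyA
          · exact ⟨_, Finset.mem_insert_self _ _, Finset.mem_insert_self _ _⟩
          · obtain ⟨C, hC, hyC⟩ := (hpart Q hQF).2.2.1 y ((hpart P hPF).2.1 A hAP hyA)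
            by_cases hCB : C = fB Q
            · refine ⟨_, Finset.mem_insert_self _ _, ?_⟩
              exact Finset.mem_insert_of_mem (Finset.mem_inter.mpr ⟨hCB ▸ hyC, hyA⟩)
            · exact ⟨C, Finset.mem_insert_of_mem (Finset.mem_erase.mpr ⟨hCB, hC⟩), hyC⟩
        · intro C hC D hD hCD x hxC hxD
          simp only [Finset.mem_insert] at hC hD
          rcases hC with rfl | hC <;> rcases hD with rfl | hD
          · exact hCD rfl
          · -- C is the new part, D is an old part ⊆ A
            have hDA : D ⊆ A := hothers _ (Finset.mem_of_mem_erase hD) (Finset.ne_of_mem_erase hD)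
            have hxA : x ∈ A := hDA hxD
            have hxB : x ∈ fB Q := by
              rcases Finset.mem_insert.mp hxC with rfl | hx
              · exact absurd hxA hysA
              · exact (Finset.mem_inter.mp hx).1
            exact (hpart Q hQF).2.2.2 _ (Finset.mem_of_mem_erase hD) _ hBQ
              (Finset.ne_of_mem_erase hD) x hxD hxB
          · have hCA : C ⊆ A := hothers _ (Finset.mem_of_mem_erase hC) (Finset.ne_of_mem_erase hC)
            have hxA : x ∈ A := hCA hxC
            have hxB : x ∈ fB Q := by
              rcases Finset.mem_insert.mp hxD with rfl | hx
              · exact absurd hxA hysA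
              · exact (Finset.mem_inter.mp hx).1
            exact (hpart Q hQF).2.2.2 _ (Finset.mem_of_mem_erase hC) _ hBQ
              (Finset.ne_of_mem_erase hC) x hxC hxB
          · exact (hpart Q hQF).2.2.2 _ (Finset.mem_of_mem_erase hC) _
              (Finset.mem_of_mem_erase hD) hCD x hxC hxD
      -- injectivity of ind on G
      have hinj : Set.InjOn ind ↑G := by
        intro Q1 hQ1 Q2 hQ2 heq
        obtain ⟨hQ1F, hB1, hYB1⟩ := hGfacts Q1 hQ1
        obtain ⟨hQ2F, hB2, hYB2⟩ := hGfacts Q2 hQ2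
        have hN1 : insert ys (fB Q1 ∩ A) ∈ ind Q2 := by
          rw [← heq]; simp only [hind]; exact Finset.mem_insert_self _ _
        simp only [hind] at hN1
        rcases Finset.mem_insert.mp hN1 with hN | hN
        swap
        · exfalso
          have hsubA : insert ys (fB Q1 ∩ A) ⊆ A :=
            parts_subset (hpart Q2 hQ2F) hB2 hYB2 _ (Finset.mem_of_mem_erase hN)
              (Finset.ne_of_mem_erase hN)
          exact hysA (hsubA (Finset.mem_insert_self _ _))
        -- so the new parts coincide, hence fB Q1 = fB Q2
        have hBA : fB Q1 ∩ A = fB Q2 ∩ A := by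
          have h1 : ys ∉ fB Q1 ∩ A := fun h => hysA (Finset.mem_inter.mp h).2
          have h2 : ys ∉ fB Q2 ∩ A := fun h => hysA (Finset.mem_inter.mp h).2
          have := congrArg (fun s => s.erase ys) hN
          simpa [Finset.erase_insert h1, Finset.erase_insert h2] using this
        have hBB : fB Q1 = fB Q2 := by
          rw [hBrec Q1 hQ1, hBrec Q2 hQ2, hBA]
        have herase : Q1.erase (fB Q1) = Q2.erase (fB Q2) := by
          have e1 : (ind Q1).erase (insert ys (fB Q1 ∩ A)) = Q1.erase (fB Q1) := by
            simp only [hind]; exact Finset.erase_insert (hNmem Q1 hQ1)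
          have e2 : (ind Q2).erase (insert ys (fB Q2 ∩ A)) = Q2.erase (fB Q2) := by
            simp only [hind]; exact Finset.erase_insert (hNmem Q2 hQ2)
          rw [← e1, ← e2, heq, hBA]
        calc Q1 = insert (fB Q1) (Q1.erase (fB Q1)) := (Finset.insert_erase hB1).symm
          _ = Q2 := by rw [herase, hBB]; exact Finset.insert_erase hB2
      -- compatibility of images
      have hcompat' : ∀ P1 ∈ G.image ind, ∀ P2 ∈ G.image ind, P1 ≠ P2 → Compat Y' P1 P2 := by
        intro P1 hP1 P2 hP2 hne12
        obtain ⟨Q1, hQ1, rfl⟩ := Finset.mem_image.mp hP1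
        obtain ⟨Q2, hQ2, rfl⟩ := Finset.mem_image.mp hP2
        obtain ⟨hQ1F, hB1, hYB1⟩ := hGfacts Q1 hQ1
        obtain ⟨hQ2F, hB2, hYB2⟩ := hGfacts Q2 hQ2
        have hQne : Q1 ≠ Q2 := fun h => hne12 (h ▸ rfl)
        have hQ1P : Q1 ≠ P := Finset.ne_of_mem_erase (Finset.mem_filter.mp hQ1).1
        have hQ2P : Q2 ≠ P := Finset.ne_of_mem_erase (Finset.mem_filter.mp hQ2).1
        obtain ⟨B, hBQ1, C, hCQ2, hYBC⟩ := hcompat Q1 hQ1F Q2 hQ2F hQne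
        simp only [hind, hY', Compat]
        by_cases hB : B = fB Q1
        · have hsd : (insert ys A) \ insert ys (B ∩ A) ⊆ A \ B := by
            intro x hx
            rw [Finset.mem_sdiff, Finset.mem_insert, Finset.mem_insert] at hx
            push_neg at hx
            obtain ⟨h1 | h1, h2, h3⟩ := hx
            · exact absurd h1 h2
            · exact Finset.mem_sdiff.mpr ⟨h1, fun hxB => h3 (Finset.mem_inter.mpr ⟨hxB, h1⟩)⟩
          have hABC : A \ B ⊆ C := by
            intro x hx
            rw [Finset.mem_sdiff] at hx
            exact hYBC (Finset.mem_sdiff.mpr ⟨(hpart P hPF).2.1 A hAP hx.1, hx.2⟩)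
          by_cases hC : C = fB Q2
          · refine ⟨_, Finset.mem_insert_self _ _, _, Finset.mem_insert_self _ _, ?_⟩
            intro x hx
            rw [← hB] at hx
            have hx' := hsd hx
            refine Finset.mem_insert_of_mem (Finset.mem_inter.mpr
              ⟨by rw [← hC]; exact hABC hx', (Finset.mem_sdiff.mp hx').1⟩)
          · refine ⟨_, Finset.mem_insert_self _ _, C,
              Finset.mem_insert_of_mem (Finset.mem_erase.mpr ⟨hC, hCQ2⟩), ?_⟩
            intro x hx
            rw [← hB] at hx
            exact hABC (hsd hx)
        · -- B is an old part of Q1, hence ⊆ A; then ys ∈ C forces C = fB Q2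
          have hBsubA : B ⊆ A := parts_subset (hpart Q1 hQ1F) hB1 hYB1 B hBQ1 hB
          have hysB : ys ∉ B := fun h => hysA (hBsubA h)
          have hysC : ys ∈ C := hYBC (Finset.mem_sdiff.mpr ⟨hysY, hysB⟩)
          have hC : C = fB Q2 := by
            by_contra hCne
            exact hysA (parts_subset (hpart Q2 hQ2F) hB2 hYB2 C hCQ2 hCne hysC)
          refine ⟨B, Finset.mem_insert_of_mem (Finset.mem_erase.mpr ⟨hB, hBQ1⟩),
            _, Finset.mem_insert_self _ _, ?_⟩
          intro x hx
          rw [Finset.mem_sdiff, Finset.mem_insert] at hx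
          obtain ⟨h1 | h1, h2⟩ := hx
          · exact h1 ▸ Finset.mem_insert_self _ _
          · refine Finset.mem_insert_of_mem (Finset.mem_inter.mpr ⟨?_, h1⟩)
            rw [← hC]
            exact hYBC (Finset.mem_sdiff.mpr ⟨(hpart P hPF).2.1 A hAP h1, h2⟩)
      -- apply the inductive hypothesis on Y'
      have hY'card : Y'.card = A.card + 1 := by
        rw [hY', Finset.card_insert_of_notMem hysA]
      have hY'N : Y'.card ≤ N := by omega
      have himage : (G.image ind).card = G.card := Finset.card_image_of_injOn hinj
      have h3' : ∀ P' ∈ G.image ind, 3 ≤ P'.card := by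
        intro P' hP'
        obtain ⟨Q, hQ, rfl⟩ := Finset.mem_image.mp hP'
        rw [hindcard Q hQ]
        exact h3 Q (hGfacts Q hQ).1
      have hpartn' : ∀ P' ∈ G.image ind, IsPartn Y' P' := by
        intro P' hP'
        obtain ⟨Q, hQ, rfl⟩ := Finset.mem_image.mp hP'
        exact hindpartn Q hQ
      have := IH Y' (G.image ind) hY'N hpartn' h3' hcompat'
        (hGne.image ind)
      omega
    -- sum up
    have hsum : ∑ A ∈ P, ((rest.filter fun Q => fA Q = A).card + 1) ≤ ∑ A ∈ P, A.card :=
      Finset.sum_le_sum key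
    rw [Finset.sum_add_distrib, Finset.sum_const, smul_eq_mul, mul_one,
      partn_sum_card (hpart P hPF)] at hsum
    have hFP : rest.card + 1 = F.card := by
      rw [hrest, Finset.card_erase_of_mem hPF]
      have : 0 < F.card := Finset.card_pos.mpr ⟨P, hPF⟩
      omega
    have h3P := h3 P hPF
    omega

end Abstract

section Deterministic

attribute [local instance] Classical.propDecidable

variable {d : ℕ}

/-- The box `[-m,m]^d` as a finset. -/
noncomputable def boxF (d m : ℕ) : Finset (Vd d) :=
  Fintype.piFinset (fun _ : Fin d => (Finset.Icc (-(m : ℤ)) m))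

lemma mem_boxF {m : ℕ} {x : Vd d} : x ∈ boxF d m ↔ ∀ i, |x i| ≤ (m : ℤ) := by
  simp only [boxF, Fintype.mem_piFinset, Finset.mem_Icc]
  constructor
  · intro h i; exact abs_le.mpr (h i)
  · intro h i; exact abs_le.mp (h i)

lemma card_boxF (d m : ℕ) : (boxF d m).card = (2 * m + 1) ^ d := by
  rw [boxF, Fintype.card_piFinset]
  have : ((Finset.Icc (-(m : ℤ)) m)).card = 2 * m + 1 := by
    rw [Int.card_Icc]
    omega
  simp [this]

lemma boxF_mono {m m' : ℕ} (h : m ≤ m') : boxF d m ⊆ boxF d m' := by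
  intro x hx
  rw [mem_boxF] at hx ⊢
  intro i
  calc |x i| ≤ (m : ℤ) := hx i
    _ ≤ (m' : ℤ) := by exact_mod_cast Int.ofNat_le.mpr h

/-- The deterministic Burton–Keane bound: the number of trifurcations in the box `[-m,m]^d`
is at most the number of points of the shell `[-(m+1),m+1]^d \ [-m,m]^d`. -/
theorem det_bound (ω : Ed d → Bool) (m : ℕ) :
    ((boxF d m).filter (fun x => Trifurcation ω x)).card ≤
      (boxF d (m + 1) \ boxF d m).card := by
  classical
  set ShellF := boxF d (m + 1) \ boxF d m with hShellF
  set T := (boxF d m).filter (fun x => Trifurcation ω x) with hT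
  set Yof : Vd d → Finset (Vd d) := fun t => ShellF.filter (fun z => OpenConn ω t z) with hYof
  set prt : Vd d → Vd d → Finset (Vd d) :=
    fun t y => (Yof t).filter (fun z => OpenConn (closeAt ω t) y z) with hprt
  set Pof : Vd d → Finset (Finset (Vd d)) := fun t => (Yof t).image (prt t) with hPof
  have hmem_prt : ∀ t y z, z ∈ prt t y ↔ z ∈ Yof t ∧ OpenConn (closeAt ω t) y z := by
    intro t y z
    simp only [hprt, Finset.mem_filter]
  have hmem_Pof : ∀ t A, A ∈ Pof t ↔ ∃ y ∈ Yof t, prt t y = A := by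
    intro t A
    simp only [hPof, Finset.mem_image]
  -- membership in the shell
  have hshell_mem : ∀ z : Vd d, (∀ i, |z i| ≤ (m : ℤ) + 1) → (∃ i, |z i| = (m : ℤ) + 1) →
      z ∈ ShellF := by
    intro z h1 h2
    rw [hShellF, Finset.mem_sdiff, mem_boxF, mem_boxF]
    push_cast
    refine ⟨h1, ?_⟩
    push_neg
    obtain ⟨i, hi⟩ := h2
    exact ⟨i, by omega⟩
  have hshell_out : ∀ z ∈ ShellF, ¬ ∀ i, |z i| ≤ (m : ℤ) := by
    intro z hz
    rw [hShellF, Finset.mem_sdiff] at hz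
    exact fun h => hz.2 (mem_boxF.mpr h)
  -- basic facts for t ∈ T
  have hTbox : ∀ t ∈ T, ∀ i, |t i| ≤ (m : ℤ) := by
    intro t ht
    exact mem_boxF.mp (Finset.mem_filter.mp ht).1
  have hTtrif : ∀ t ∈ T, Trifurcation ω t := fun t ht => (Finset.mem_filter.mp ht).2
  have hYconn : ∀ t, ∀ z ∈ Yof t, OpenConn ω t z := by
    intro t z hz
    exact (Finset.mem_filter.mp hz).2
  have hYshell : ∀ t, ∀ z ∈ Yof t, z ∈ ShellF := by
    intro t z hz
    exact (Finset.mem_filter.mp hz).1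
  have hYne' : ∀ t ∈ T, ∀ z ∈ Yof t, z ≠ t := by
    intro t ht z hz h
    subst h
    exact hshell_out z (Finset.mem_filter.mp hz).1 (fun i => hTbox z ht i)
  -- every infinite closeAt-branch attached to t reaches the shell within Y
  have hbranch_shell : ∀ t ∈ T, ∀ y : Vd d, y ∈ Cluster ω t →
      (Cluster (closeAt ω t) y).Infinite →
      ∃ z ∈ Yof t, OpenConn (closeAt ω t) y z := by
    intro t ht y hy hinf
    have hyt : y ≠ t := by
      rintro rfl
      rw [cluster_closeAt_self] at hinf
      exact hinf (Set.finite_singleton y)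
    obtain ⟨w, hw, hwy⟩ := exists_branch hy hyt
    have hwbox : ∀ i, |w i| ≤ ((m + 1 : ℕ) : ℤ) := by
      intro i
      push_cast
      exact edge_box_succ hw (hTbox t ht) i
    have hwinf : (Cluster (closeAt ω t) w).Infinite := by
      rwa [← cluster_eq_of_openConn hwy]
    obtain ⟨z, hz1, hz2, hz3⟩ := cluster_meets_shell hwbox hwinf
    refine ⟨z, ?_, (openConn_symm hwy).trans hz3⟩
    rw [hYof]
    simp only [Finset.mem_filter]
    constructor
    · refine hshell_mem z (by intro i; have := hz1 i; push_cast at this ⊢; omega) ?_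
      obtain ⟨i, hi⟩ := hz2
      exact ⟨i, by push_cast at hi ⊢; omega⟩
    · have h1 : OpenConn ω t w := Relation.ReflTransGen.single hw
      exact h1.trans (openConn_of_closeAt hz3)
  -- Y is nonempty on T
  have hYne : ∀ t ∈ T, (Yof t).Nonempty := by
    intro t ht
    obtain ⟨hinf, y₁, y₂, y₃, hy₁, hy₂, hy₃, h₁, h₂, h₃, h₁₂, h₁₃, h₂₃⟩ := hTtrif t ht
    obtain ⟨z, hz, -⟩ := hbranch_shell t ht y₁ hy₁ h₁
    exact ⟨z, hz⟩
  -- parts are well defined up to closeAt-connectivity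
  have hprt_eq : ∀ t (y y' : Vd d), OpenConn (closeAt ω t) y y' → prt t y = prt t y' := by
    intro t y y' h
    ext z
    rw [hmem_prt, hmem_prt]
    exact ⟨fun ⟨h1, h2⟩ => ⟨h1, (openConn_symm h).trans h2⟩,
      fun ⟨h1, h2⟩ => ⟨h1, h.trans h2⟩⟩
  have hYof_eq : ∀ t s, OpenConn ω t s → Yof t = Yof s := by
    intro t s h
    ext z
    simp only [hYof, Finset.mem_filter]
    exact ⟨fun ⟨h1, h2⟩ => ⟨h1, (openConn_symm h).trans h2⟩,
      fun ⟨h1, h2⟩ => ⟨h1, h.trans h2⟩⟩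
  -- Pof t is a partition of Yof t
  have hpartn : ∀ t, IsPartn (Yof t) (Pof t) := by
    intro t
    refine ⟨?_, ?_, ?_, ?_⟩
    · intro A hA
      obtain ⟨y, hy, rfl⟩ := (hmem_Pof t A).mp hA
      exact ⟨y, (hmem_prt t y y).mpr ⟨hy, openConn_refl _ _⟩⟩
    · intro A hA
      obtain ⟨y, hy, rfl⟩ := (hmem_Pof t A).mp hA
      intro z hz
      exact ((hmem_prt t y z).mp hz).1
    · intro y hy
      exact ⟨prt t y, (hmem_Pof t _).mpr ⟨y, hy, rfl⟩,
        (hmem_prt t y y).mpr ⟨hy, openConn_refl _ _⟩⟩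
    · intro A hA B hB hAB x hxA hxB
      obtain ⟨y, hy, rfl⟩ := (hmem_Pof t A).mp hA
      obtain ⟨y', hy', rfl⟩ := (hmem_Pof t B).mp hB
      have h1 := ((hmem_prt t y x).mp hxA).2
      have h2 := ((hmem_prt t y' x).mp hxB).2
      exact hAB (hprt_eq t y y' (h1.trans (openConn_symm h2)))
  -- Pof t has at least three parts
  have h3parts : ∀ t ∈ T, 3 ≤ (Pof t).card := by
    intro t ht
    obtain ⟨hinf, y₁, y₂, y₃, hy₁, hy₂, hy₃, h₁, h₂, h₃, h₁₂, h₁₃, h₂₃⟩ := hTtrif t ht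
    obtain ⟨z₁, hz₁Y, hz₁c⟩ := hbranch_shell t ht y₁ hy₁ h₁
    obtain ⟨z₂, hz₂Y, hz₂c⟩ := hbranch_shell t ht y₂ hy₂ h₂
    obtain ⟨z₃, hz₃Y, hz₃c⟩ := hbranch_shell t ht y₃ hy₃ h₃
    have key : ∀ zi zj yi yj : Vd d, zj ∈ Yof t → OpenConn (closeAt ω t) yi zi →
        OpenConn (closeAt ω t) yj zj →
        Cluster (closeAt ω t) yi ≠ Cluster (closeAt ω t) yj → prt t zi ≠ prt t zj := by
      intro zi zj yi yj hzjY hi hj hne heq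
      apply hne
      rw [cluster_eq_iff]
      have hmem : zj ∈ prt t zi := by
        rw [heq]
        exact (hmem_prt t zj zj).mpr ⟨hzjY, openConn_refl _ _⟩
      have hzz : OpenConn (closeAt ω t) zi zj := ((hmem_prt t zi zj).mp hmem).2
      exact (hi.trans hzz).trans (openConn_symm hj)
    have hne12 := key z₁ z₂ y₁ y₂ hz₂Y hz₁c hz₂c h₁₂
    have hne13 := key z₁ z₃ y₁ y₃ hz₃Y hz₁c hz₃c h₁₃
    have hne23 := key z₂ z₃ y₂ y₃ hz₃Y hz₂c hz₃c h₂₃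
    have hsub : ({prt t z₁, prt t z₂, prt t z₃} : Finset _) ⊆ Pof t := by
      intro A hA
      simp only [Finset.mem_insert, Finset.mem_singleton] at hA
      rcases hA with rfl | rfl | rfl
      · exact (hmem_Pof t _).mpr ⟨z₁, hz₁Y, rfl⟩
      · exact (hmem_Pof t _).mpr ⟨z₂, hz₂Y, rfl⟩
      · exact (hmem_Pof t _).mpr ⟨z₃, hz₃Y, rfl⟩
    have hc3 : ({prt t z₁, prt t z₂, prt t z₃} : Finset _).card = 3 := by
      rw [Finset.card_insert_of_notMem (by simp [hne12, hne13]),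
        Finset.card_insert_of_notMem (by simp [hne23]), Finset.card_singleton]
    rw [← hc3]
    exact Finset.card_le_card hsub
  -- the key transfer claim
  have hstar : ∀ t ∈ T, ∀ s : Vd d, s ≠ t → ∀ y ∈ Yof t,
      ¬ OpenConn (closeAt ω t) s y → OpenConn (closeAt ω s) t y := by
    intro t ht s hst y hy hnc
    have hyt : y ≠ t := hYne' t ht y hy
    obtain ⟨w, hw, hwy⟩ := exists_branch (hYconn t y hy) hyt
    have hsw : s ∉ Cluster (closeAt ω t) w := by
      intro hs
      exact hnc ((openConn_symm hs).trans hwy)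
    have hwys : OpenConn (closeAt ω s) w y := openConn_transfer hwy hsw
    have hws : w ≠ s := by
      rintro rfl
      exact hsw (openConn_refl _ _)
    have hedge : EdgeOpen (closeAt ω s) t w :=
      edgeOpen_closeAt_of hw (fun h => hst h.symm) hws
    exact (Relation.ReflTransGen.single hedge).trans hwys
  -- compatibility
  have hcompat : ∀ t ∈ T, ∀ s ∈ T, Yof s = Yof t → s ≠ t →
      Compat (Yof t) (Pof t) (Pof s) := by
    intro t ht s hs hYeq hst
    obtain ⟨z0, hz0⟩ := hYne t ht
    by_cases hD : ∃ z1 ∈ Yof t, OpenConn (closeAt ω t) s z1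
    · obtain ⟨z1, hz1, hz1c⟩ := hD
      refine ⟨prt t z1, (hmem_Pof t _).mpr ⟨z1, hz1, rfl⟩, ?_⟩
      by_cases hYB : (Yof t \ prt t z1).Nonempty
      · obtain ⟨y0, hy0⟩ := hYB
        have hy0Y : y0 ∈ Yof t := (Finset.mem_sdiff.mp hy0).1
        have hy0B : y0 ∉ prt t z1 := (Finset.mem_sdiff.mp hy0).2
        refine ⟨prt s y0, (hmem_Pof s _).mpr ⟨y0, hYeq ▸ hy0Y, rfl⟩, ?_⟩
        intro y hy
        have hyY : y ∈ Yof t := (Finset.mem_sdiff.mp hy).1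
        have hyB : y ∉ prt t z1 := (Finset.mem_sdiff.mp hy).2
        have hnc : ∀ u ∈ Yof t, u ∉ prt t z1 → ¬ OpenConn (closeAt ω t) s u := by
          intro u hu huB hcon
          exact huB ((hmem_prt t z1 u).mpr ⟨hu, (openConn_symm hz1c).trans hcon⟩)
        have hty := hstar t ht s hst y hyY (hnc y hyY hyB)
        have hty0 := hstar t ht s hst y0 hy0Y (hnc y0 hy0Y hy0B)
        exact (hmem_prt s y0 y).mpr ⟨hYeq ▸ hyY, (openConn_symm hty0).trans hty⟩
      · rw [Finset.not_nonempty_iff_eq_empty] at hYB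
        refine ⟨prt s z0, (hmem_Pof s _).mpr ⟨z0, hYeq ▸ hz0, rfl⟩, ?_⟩
        rw [hYB]
        exact Finset.empty_subset _
    · push_neg at hD
      refine ⟨prt t z0, (hmem_Pof t _).mpr ⟨z0, hz0, rfl⟩,
        prt s z0, (hmem_Pof s _).mpr ⟨z0, hYeq ▸ hz0, rfl⟩, ?_⟩
      intro y hy
      have hyY : y ∈ Yof t := (Finset.mem_sdiff.mp hy).1
      have hty := hstar t ht s hst y hyY (hD y hyY)
      have htz0 := hstar t ht s hst z0 hz0 (hD z0 hz0)
      exact (hmem_prt s z0 y).mpr ⟨hYeq ▸ hyY, (openConn_symm htz0).trans hty⟩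
  -- injectivity of Pof on a fiber
  have hinj : ∀ t ∈ T, ∀ s ∈ T, Yof s = Yof t → s ≠ t → Pof s ≠ Pof t := by
    intro t ht s hs hYeq hst heqP
    obtain ⟨B, hB, B', hB', hYBB⟩ := hcompat t ht s hs hYeq hst
    have h3 := h3parts t ht
    have h2 : 1 < ((Pof t).erase B).card := by
      rw [Finset.card_erase_of_mem hB]
      omega
    obtain ⟨E1, hE1⟩ := Finset.card_pos.mp (show 0 < ((Pof t).erase B).card by omega)
    obtain ⟨E2, hE2, hE21⟩ := Finset.exists_mem_ne h2 E1
    have hE1P : E1 ∈ Pof t := Finset.mem_of_mem_erase hE1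
    have hE2P : E2 ∈ Pof t := Finset.mem_of_mem_erase hE2
    have hE1B : E1 ≠ B := Finset.ne_of_mem_erase hE1
    have hE2B : E2 ≠ B := Finset.ne_of_mem_erase hE2
    have hB'P : B' ∈ Pof t := heqP ▸ hB'
    have hEB' : ∀ E, E ∈ Pof t → E ≠ B → E = B' := by
      intro E hEP hEB
      obtain ⟨x, hx⟩ := (hpartn t).1 E hEP
      have hxY : x ∈ Yof t := (hpartn t).2.1 E hEP hx
      have hxB : x ∉ B := (hpartn t).2.2.2 E hEP B hB hEB x hx
      have hxB' : x ∈ B' := hYBB (Finset.mem_sdiff.mpr ⟨hxY, hxB⟩)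
      by_contra hne'
      exact (hpartn t).2.2.2 E hEP B' hB'P hne' x hx hxB'
    exact hE21 ((hEB' E2 hE2P hE2B).trans (hEB' E1 hE1P hE1B).symm)
  -- assemble: fiber decomposition over the images of Yof
  have hfiber : T.card = ∑ Y ∈ T.image Yof, (T.filter fun t => Yof t = Y).card :=
    Finset.card_eq_sum_card_fiberwise (fun t ht => Finset.mem_image_of_mem _ ht)
  have hper : ∀ Y ∈ T.image Yof, (T.filter fun t => Yof t = Y).card ≤ Y.card := by
    intro Y hY
    set Tf := T.filter fun t => Yof t = Y with hTf
    rcases Tf.eq_empty_or_nonempty with he | hne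
    · rw [he]
      simp
    · have hTfT : ∀ a ∈ Tf, a ∈ T ∧ Yof a = Y := by
        intro a ha
        exact Finset.mem_filter.mp ha
      have hinjY : Set.InjOn Pof ↑Tf := by
        intro a ha b hb hab
        by_contra hne'
        have ha' := hTfT a ha
        have hb' := hTfT b hb
        exact hinj b hb'.1 a ha'.1 (ha'.2.trans hb'.2.symm) hne' hab
      have hcardF : (Tf.image Pof).card = Tf.card := Finset.card_image_of_injOn hinjY
      have hbk := bk_abstract (α := Vd d) Y.card Y (Tf.image Pof) le_rfl ?_ ?_ ?_
        (hne.image _)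
      · omega
      · intro P hP
        obtain ⟨a, ha, rfl⟩ := Finset.mem_image.mp hP
        exact (hTfT a ha).2 ▸ hpartn a
      · intro P hP
        obtain ⟨a, ha, rfl⟩ := Finset.mem_image.mp hP
        exact h3parts a (hTfT a ha).1
      · intro P hP Q hQ hPQ
        obtain ⟨a, ha, rfl⟩ := Finset.mem_image.mp hP
        obtain ⟨b, hb, rfl⟩ := Finset.mem_image.mp hQ
        have hab : b ≠ a := by
          rintro rfl
          exact hPQ rfl
        have ha' := hTfT a ha
        have hb' := hTfT b hb
        have := hcompat a ha'.1 b hb'.1 (hb'.2.trans ha'.2.symm) hab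
        exact ha'.2 ▸ this
  -- distinct fibers have disjoint shell sets
  have hdisjY : ∀ Y1 ∈ T.image Yof, ∀ Y2 ∈ T.image Yof, Y1 ≠ Y2 →
      Disjoint Y1 Y2 := by
    intro Y1 hY1 Y2 hY2 hne12
    obtain ⟨t1, ht1, rfl⟩ := Finset.mem_image.mp hY1
    obtain ⟨t2, ht2, rfl⟩ := Finset.mem_image.mp hY2
    rw [Finset.disjoint_left]
    intro x hx1 hx2
    exact hne12 (hYof_eq t1 t2 ((hYconn t1 x hx1).trans (openConn_symm (hYconn t2 x hx2))))
  have hsum2 : ∑ Y ∈ T.image Yof, Y.card ≤ ShellF.card := by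
    rw [← Finset.card_biUnion hdisjY]
    apply Finset.card_le_card
    intro x hx
    obtain ⟨Y, hY, hxY⟩ := Finset.mem_biUnion.mp hx
    obtain ⟨t1, ht1, rfl⟩ := Finset.mem_image.mp hY
    exact hYshell t1 x hxY
  calc T.card = ∑ Y ∈ T.image Yof, (T.filter fun t => Yof t = Y).card := hfiber
    _ ≤ ∑ Y ∈ T.image Yof, Y.card := Finset.sum_le_sum hper
    _ ≤ ShellF.card := hsum2

end Deterministic

section Measurability

attribute [local instance] Classical.propDecidable

variable {d : ℕ}

lemma closeAt_apply (ω : Ed d → Bool) (x : Vd d) (e : Ed d) :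
    closeAt ω x e = if e.1 = x ∨ e.1 + unitv e.2 = x then false else ω e := by
  unfold closeAt
  congr

/-- reachability in at most `n` steps -/
def ReachN {d : ℕ} (ω : Ed d → Bool) : ℕ → Vd d → Vd d → Prop
  | 0, x, y => x = y
  | (n + 1), x, y => ∃ z, ReachN ω n x z ∧ EdgeOpen ω z y

lemma openConn_iff_reachN {ω : Ed d → Bool} {x y : Vd d} :
    OpenConn ω x y ↔ ∃ n, ReachN ω n x y := by
  constructor
  · intro h
    induction h with
    | refl => exact ⟨0, rfl⟩
    | @tail c e hxc he ih =>
      obtain ⟨n, hn⟩ := ih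
      exact ⟨n + 1, c, hn, he⟩
  · rintro ⟨n, hn⟩
    induction n generalizing y with
    | zero => exact hn ▸ Relation.ReflTransGen.refl
    | succ n ih =>
      obtain ⟨z, hz, he⟩ := hn
      exact (ih hz).tail he

lemma measurableSet_prop_and_eval (P : Prop) (e : Ed d) :
    MeasurableSet {ω : Ed d → Bool | P ∧ ω e = true} := by
  by_cases h : P
  · simp only [h, true_and]
    have : {ω : Ed d → Bool | ω e = true} = (fun ω : Ed d → Bool => ω e) ⁻¹' {true} := by
      ext ω; simp
    rw [this]
    exact measurable_pi_apply e (measurableSet_singleton true)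
  · simp [h]

lemma measurableSet_edgeOpen (x y : Vd d) :
    MeasurableSet {ω : Ed d → Bool | EdgeOpen ω x y} := by
  have : {ω : Ed d → Bool | EdgeOpen ω x y} =
      ⋃ i : Fin d, ({ω : Ed d → Bool | y = x + unitv i ∧ ω (x, i) = true} ∪
        {ω : Ed d → Bool | x = y + unitv i ∧ ω (y, i) = true}) := by
    ext ω
    simp only [Set.mem_iUnion, Set.mem_union, Set.mem_setOf_eq, EdgeOpen]
  rw [this]
  exact MeasurableSet.iUnion fun i =>
    (measurableSet_prop_and_eval _ _).union (measurableSet_prop_and_eval _ _)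

lemma measurableSet_reachN (n : ℕ) (x y : Vd d) :
    MeasurableSet {ω : Ed d → Bool | ReachN ω n x y} := by
  induction n generalizing y with
  | zero =>
    by_cases h : x = y
    · simp only [ReachN, h]
      simp
    · simp only [ReachN, h]
      simp
  | succ n ih =>
    have : {ω : Ed d → Bool | ReachN ω (n + 1) x y} =
        ⋃ z : Vd d, ({ω : Ed d → Bool | ReachN ω n x z} ∩ {ω | EdgeOpen ω z y}) := by
      ext ω
      simp only [Set.mem_iUnion, Set.mem_inter_iff, Set.mem_setOf_eq, ReachN]
    rw [this]
    exact MeasurableSet.iUnion fun z => (ih z).inter (measurableSet_edgeOpen z y)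

lemma measurableSet_openConn (x y : Vd d) :
    MeasurableSet {ω : Ed d → Bool | OpenConn ω x y} := by
  have : {ω : Ed d → Bool | OpenConn ω x y} = ⋃ n : ℕ, {ω | ReachN ω n x y} := by
    ext ω
    simp only [Set.mem_iUnion, Set.mem_setOf_eq, openConn_iff_reachN]
  rw [this]
  exact MeasurableSet.iUnion fun n => measurableSet_reachN n x y

lemma measurableSet_clusterInfinite (x : Vd d) :
    MeasurableSet {ω : Ed d → Bool | (Cluster ω x).Infinite} := by
  have heq : {ω : Ed d → Bool | (Cluster ω x).Infinite} =
      (⋃ F : Finset (Vd d), ⋂ y : Vd d, {ω | OpenConn ω x y → y ∈ F})ᶜ := by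
    ext ω
    simp only [Set.mem_compl_iff, Set.mem_iUnion, Set.mem_iInter, Set.mem_setOf_eq]
    constructor
    · intro h ⟨F, hF⟩
      exact h (Set.Finite.subset F.finite_toSet (fun y hy => hF y hy))
    · intro h hfin
      exact h ⟨hfin.toFinset, fun y hy => hfin.mem_toFinset.mpr hy⟩
  rw [heq]
  refine (MeasurableSet.iUnion fun F => MeasurableSet.iInter fun y => ?_).compl
  by_cases hy : y ∈ F
  · simp only [hy]
    simp
  · have : {ω : Ed d → Bool | OpenConn ω x y → y ∈ F} = {ω | OpenConn ω x y}ᶜ := by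
      ext ω
      simp [hy]
    rw [this]
    exact (measurableSet_openConn x y).compl

lemma measurable_closeAtFun (x : Vd d) :
    Measurable (fun ω : Ed d → Bool => closeAt ω x) := by
  apply measurable_pi_lambda
  intro e
  by_cases h : e.1 = x ∨ e.1 + unitv e.2 = x
  · have : (fun ω : Ed d → Bool => closeAt ω x e) = fun _ => false := by
      funext ω
      rw [closeAt_apply, if_pos h]
    rw [this]
    exact measurable_const
  · have : (fun ω : Ed d → Bool => closeAt ω x e) = fun ω => ω e := by
      funext ω
      rw [closeAt_apply, if_neg h]
    rw [this]
    exact measurable_pi_apply e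

lemma cluster_ne_iff {ω : Ed d → Bool} {a b : Vd d} :
    Cluster ω a ≠ Cluster ω b ↔ ¬ OpenConn ω a b := not_congr cluster_eq_iff

lemma measurableSet_trif (x : Vd d) :
    MeasurableSet {ω : Ed d → Bool | Trifurcation ω x} := by
  have heq : {ω : Ed d → Bool | Trifurcation ω x} =
      {ω | (Cluster ω x).Infinite} ∩
        ⋃ y₁ : Vd d, ⋃ y₂ : Vd d, ⋃ y₃ : Vd d,
          ({ω : Ed d → Bool | OpenConn ω x y₁} ∩ {ω | OpenConn ω x y₂} ∩ {ω | OpenConn ω x y₃} ∩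
            ((fun ω : Ed d → Bool => closeAt ω x) ⁻¹'
              ({ω : Ed d → Bool | (Cluster ω y₁).Infinite} ∩ {ω | (Cluster ω y₂).Infinite} ∩
                {ω | (Cluster ω y₃).Infinite} ∩ {ω | OpenConn ω y₁ y₂}ᶜ ∩
                {ω | OpenConn ω y₁ y₃}ᶜ ∩ {ω | OpenConn ω y₂ y₃}ᶜ))) := by
    ext ω
    simp only [Trifurcation, Set.mem_inter_iff, Set.mem_iUnion, Set.mem_setOf_eq,
      Set.mem_preimage, Set.mem_compl_iff, Cluster, cluster_ne_iff]
    constructor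
    · rintro ⟨h0, y₁, y₂, y₃, h1, h2, h3, h4, h5, h6, h7, h8, h9⟩
      exact ⟨h0, y₁, y₂, y₃, ⟨⟨⟨h1, h2⟩, h3⟩,
        ⟨⟨⟨⟨⟨h4, h5⟩, h6⟩, cluster_ne_iff.mp h7⟩, cluster_ne_iff.mp h8⟩, cluster_ne_iff.mp h9⟩⟩⟩
    · rintro ⟨h0, y₁, y₂, y₃, ⟨⟨⟨h1, h2⟩, h3⟩,
        ⟨⟨⟨⟨⟨h4, h5⟩, h6⟩, h7⟩, h8⟩, h9⟩⟩⟩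
      exact ⟨h0, y₁, y₂, y₃, h1, h2, h3, h4, h5, h6,
        cluster_ne_iff.mpr h7, cluster_ne_iff.mpr h8, cluster_ne_iff.mpr h9⟩
  rw [heq]
  refine (measurableSet_clusterInfinite x).inter ?_
  refine MeasurableSet.iUnion fun y₁ => MeasurableSet.iUnion fun y₂ =>
    MeasurableSet.iUnion fun y₃ => ?_
  refine MeasurableSet.inter ?_ ?_
  · exact ((measurableSet_openConn x y₁).inter (measurableSet_openConn x y₂)).inter
      (measurableSet_openConn x y₃)
  · refine (measurable_closeAtFun x) ?_
    refine MeasurableSet.inter ?_ (measurableSet_openConn y₂ y₃).compl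
    refine MeasurableSet.inter ?_ (measurableSet_openConn y₁ y₃).compl
    refine MeasurableSet.inter ?_ (measurableSet_openConn y₁ y₂).compl
    exact ((measurableSet_clusterInfinite y₁).inter (measurableSet_clusterInfinite y₂)).inter
      (measurableSet_clusterInfinite y₃)

end Measurability

section Translation

variable {d : ℕ}

/-- the translation of a configuration by `v` -/
noncomputable def shiftC {d : ℕ} (v : Vd d) (ω : Ed d → Bool) : Ed d → Bool :=
  fun e => ω (e.1 + v, e.2)

lemma measurable_shiftC (v : Vd d) : Measurable (shiftC (d := d) v) :=
  measurable_pi_lambda _ (fun e => measurable_pi_apply _)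

lemma edgeOpen_shiftC {v : Vd d} {ω : Ed d → Bool} {a b : Vd d} :
    EdgeOpen (shiftC v ω) a b ↔ EdgeOpen ω (a + v) (b + v) := by
  unfold EdgeOpen shiftC
  refine exists_congr fun i => ?_
  have h1 : b = a + unitv i ↔ b + v = a + v + unitv i := by
    rw [add_right_comm]
    exact (add_left_inj v).symm
  have h2 : a = b + unitv i ↔ a + v = b + v + unitv i := by
    rw [add_right_comm]
    exact (add_left_inj v).symm
  rw [h1, h2]

lemma openConn_shiftC {v : Vd d} {ω : Ed d → Bool} {a b : Vd d} :
    OpenConn (shiftC v ω) a b ↔ OpenConn ω (a + v) (b + v) := by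
  constructor
  · intro h
    induction h with
    | refl => exact openConn_refl _ _
    | @tail c e hac he ih => exact ih.tail (edgeOpen_shiftC.mp he)
  · intro h
    have key : ∀ p q : Vd d, OpenConn ω p q → ∀ a b : Vd d, p = a + v → q = b + v →
        OpenConn (shiftC v ω) a b := by
      intro p q h
      induction h with
      | refl =>
        intro a b hp hq
        have : a = b := by
          have : a + v = b + v := hp ▸ hq ▸ rfl
          exact add_right_cancel this
        exact this ▸ openConn_refl _ _
      | @tail c e hac he ih =>
        intro a b hp hq
        have hc : c = (c - v) + v := by abel
        have h1 : OpenConn (shiftC v ω) a (c - v) := ih a (c - v) hp hc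
        refine h1.tail (edgeOpen_shiftC.mpr ?_)
        rw [← hc, ← hq]
        exact he
    exact key _ _ h a b rfl rfl

lemma closeAt_shiftC (ω : Ed d → Bool) (x : Vd d) :
    closeAt (shiftC x ω) 0 = shiftC x (closeAt ω x) := by
  funext e
  rw [closeAt_apply]
  show _ = closeAt ω x (e.1 + x, e.2)
  rw [closeAt_apply]
  dsimp only
  have h1 : e.1 = 0 ↔ e.1 + x = x := by
    constructor
    · intro h; rw [h, zero_add]
    · intro h; have := add_right_cancel (h.trans (zero_add x).symm); exact this
  have h2 : e.1 + unitv e.2 = 0 ↔ e.1 + x + unitv e.2 = x := by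
    rw [add_right_comm]
    constructor
    · intro h
      show e.1 + unitv e.2 + x = x
      rw [h, zero_add]
    · intro h
      have : e.1 + unitv e.2 + x = 0 + x := by rw [h, zero_add]
      exact add_right_cancel this
  by_cases h : e.1 = 0 ∨ e.1 + unitv e.2 = 0
  · have h' : e.1 + x = x ∨ e.1 + x + unitv e.2 = x := by
      rcases h with h | h
      · exact Or.inl (h1.mp h)
      · exact Or.inr (h2.mp h)
    rw [if_pos h, if_pos h']
  · have h' : ¬(e.1 + x = x ∨ e.1 + x + unitv e.2 = x) := by
      intro hc
      rcases hc with hc | hc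
      · exact h (Or.inl (h1.mpr hc))
      · exact h (Or.inr (h2.mpr hc))
    rw [if_neg h, if_neg h']
    rfl

lemma infinite_shift_cluster {ρ : Ed d → Bool} {x z : Vd d} :
    (Cluster (shiftC x ρ) z).Infinite ↔ (Cluster ρ (z + x)).Infinite := by
  have hset : Cluster (shiftC x ρ) z = (fun w => w + x) ⁻¹' Cluster ρ (z + x) := by
    ext w
    simp only [Cluster, Set.mem_preimage, Set.mem_setOf_eq]
    exact openConn_shiftC
  rw [hset]
  constructor
  · intro h
    by_contra hfin
    rw [Set.not_infinite] at hfin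
    exact h (hfin.preimage (fun a _ b _ hab => add_right_cancel hab))
  · intro h
    by_contra hfin
    rw [Set.not_infinite] at hfin
    have himg : (fun w : Vd d => w + x) '' ((fun w => w + x) ⁻¹' Cluster ρ (z + x)) =
        Cluster ρ (z + x) := by
      apply Set.image_preimage_eq
      intro w
      exact ⟨w - x, by simp⟩
    exact h (himg ▸ hfin.image _)

lemma trif_shiftC (ω : Ed d → Bool) (x : Vd d) :
    Trifurcation ω x ↔ Trifurcation (shiftC x ω) 0 := by
  have hoc : ∀ z : Vd d, OpenConn (shiftC x ω) 0 z ↔ OpenConn ω x (z + x) := by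
    intro z
    rw [openConn_shiftC, zero_add]
  have hoc' : ∀ z w : Vd d, OpenConn (closeAt (shiftC x ω) 0) z w ↔
      OpenConn (closeAt ω x) (z + x) (w + x) := by
    intro z w
    rw [closeAt_shiftC, openConn_shiftC]
  have hinf0 : (Cluster (shiftC x ω) 0).Infinite ↔ (Cluster ω x).Infinite := by
    rw [infinite_shift_cluster, zero_add]
  have hinf' : ∀ z : Vd d, (Cluster (closeAt (shiftC x ω) 0) z).Infinite ↔
      (Cluster (closeAt ω x) (z + x)).Infinite := by
    intro z
    rw [closeAt_shiftC, infinite_shift_cluster]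
  constructor
  · rintro ⟨h0, y₁, y₂, y₃, h1, h2, h3, h4, h5, h6, h7, h8, h9⟩
    refine ⟨hinf0.mpr h0, y₁ - x, y₂ - x, y₃ - x, ?_, ?_, ?_, ?_, ?_, ?_, ?_, ?_, ?_⟩
    · show OpenConn _ 0 _; rw [hoc]; simpa [Cluster] using h1
    · show OpenConn _ 0 _; rw [hoc]; simpa [Cluster] using h2
    · show OpenConn _ 0 _; rw [hoc]; simpa [Cluster] using h3
    · rw [hinf']; simpa using h4
    · rw [hinf']; simpa using h5
    · rw [hinf']; simpa using h6
    · rw [cluster_ne_iff, hoc']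
      simpa using cluster_ne_iff.mp h7
    · rw [cluster_ne_iff, hoc']
      simpa using cluster_ne_iff.mp h8
    · rw [cluster_ne_iff, hoc']
      simpa using cluster_ne_iff.mp h9
  · rintro ⟨h0, z₁, z₂, z₃, h1, h2, h3, h4, h5, h6, h7, h8, h9⟩
    refine ⟨hinf0.mp h0, z₁ + x, z₂ + x, z₃ + x, ?_, ?_, ?_, ?_, ?_, ?_, ?_, ?_, ?_⟩
    · exact (hoc z₁).mp h1
    · exact (hoc z₂).mp h2
    · exact (hoc z₃).mp h3
    · exact (hinf' z₁).mp h4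
    · exact (hinf' z₂).mp h5
    · exact (hinf' z₃).mp h6
    · exact cluster_ne_iff.mpr ((not_congr (hoc' z₁ z₂)).mp (cluster_ne_iff.mp h7))
    · exact cluster_ne_iff.mpr ((not_congr (hoc' z₁ z₃)).mp (cluster_ne_iff.mp h8))
    · exact cluster_ne_iff.mpr ((not_congr (hoc' z₂ z₃)).mp (cluster_ne_iff.mp h9))

end Translation

section MainLimit

lemma bk_ratio_tendsto (d : ℕ) :
    Filter.Tendsto (fun m : ℕ => ((2 * (m : ℝ) + 3) / (2 * (m : ℝ) + 1)) ^ d - 1)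
      Filter.atTop (nhds 0) := by
  have h2 : Filter.Tendsto (fun m : ℕ => 2 * (m : ℝ) + 1) Filter.atTop Filter.atTop := by
    apply Filter.tendsto_atTop_add_const_right
    exact Filter.Tendsto.const_mul_atTop two_pos tendsto_natCast_atTop_atTop
  have h3 : Filter.Tendsto (fun m : ℕ => 2 / (2 * (m : ℝ) + 1)) Filter.atTop (nhds 0) :=
    Filter.Tendsto.div_atTop tendsto_const_nhds h2
  have hbase : Filter.Tendsto (fun m : ℕ => (2 * (m : ℝ) + 3) / (2 * (m : ℝ) + 1))
      Filter.atTop (nhds 1) := by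
    have heq : ∀ m : ℕ, (2 * (m : ℝ) + 3) / (2 * (m : ℝ) + 1) = 1 + 2 / (2 * (m : ℝ) + 1) := by
      intro m
      have hpos : (0 : ℝ) < 2 * (m : ℝ) + 1 := by positivity
      field_simp
      ring
    simp only [heq]
    simpa using (tendsto_const_nhds (x := (1 : ℝ)) (f := Filter.atTop (α := ℕ))).add h3
  have := (hbase.pow d).sub (tendsto_const_nhds (x := (1 : ℝ)) (f := Filter.atTop (α := ℕ)))
  simpa using this

end MainLimit

/-- **Burton–Keane trifurcation bound**: for a translation-invariant finite-energy measure
`μ` on bond configurations of `ℤ^d`, the expected number of trifurcation points in the box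
`[−n,n]^d` is at most the number of boundary vertices of the box; hence the density of
trifurcation points is zero. -/
theorem burton_keane_trifurcation (d : ℕ) (hd : 2 ≤ d)
    (μ : Measure (Ed d → Bool)) (hprob : IsProbabilityMeasure μ)
    (htrans : ∀ v : Vd d, μ.map (fun ω (e : Ed d) => ω (e.1 + v, e.2)) = μ)
    (hfe : ∀ (e : Ed d) (b : Bool) (A : Set (Ed d → Bool)), MeasurableSet A → 0 < μ A →
        0 < μ ((fun ω (f : Ed d) => if f = e then b else ω f) '' A)) :
    (∀ n : ℕ, 1 ≤ n →
      (∫⁻ ω, (Set.ncard {x : Vd d | (∀ i, |x i| ≤ (n : ℤ)) ∧ Trifurcation ω x} : ℝ≥0∞) ∂μ)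
        ≤ (((2 * n + 1) ^ d - (2 * n - 1) ^ d : ℕ) : ℝ≥0∞)) ∧
    Filter.Tendsto
      (fun n : ℕ =>
        (∫⁻ ω, (Set.ncard {x : Vd d | (∀ i, |x i| ≤ (n : ℤ)) ∧ Trifurcation ω x} : ℝ≥0∞) ∂μ)
          / (((2 * n + 1) ^ d : ℕ) : ℝ≥0∞))
      Filter.atTop (nhds 0) := by
  classical
  have htrifmeas : ∀ x : Vd d, MeasurableSet {ω : Ed d → Bool | Trifurcation ω x} :=
    measurableSet_trif
  set p₀ := μ {ω : Ed d → Bool | Trifurcation ω 0} with hp₀def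
  have htransx : ∀ x : Vd d, μ {ω : Ed d → Bool | Trifurcation ω x} = p₀ := by
    intro x
    have hset : {ω : Ed d → Bool | Trifurcation ω x} =
        (fun ω (e : Ed d) => ω (e.1 + x, e.2)) ⁻¹' {ω : Ed d → Bool | Trifurcation ω 0} := by
      ext ω
      simp only [Set.mem_setOf_eq, Set.mem_preimage]
      exact trif_shiftC ω x
    rw [hset]
    calc μ ((fun ω (e : Ed d) => ω (e.1 + x, e.2)) ⁻¹' {ω : Ed d → Bool | Trifurcation ω 0})
        = (μ.map (fun ω (e : Ed d) => ω (e.1 + x, e.2))) {ω : Ed d → Bool | Trifurcation ω 0} :=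
          (MeasureTheory.Measure.map_apply (measurable_shiftC x) (htrifmeas 0)).symm
      _ = p₀ := by rw [htrans x]
  have hsetF : ∀ (n : ℕ) (ω : Ed d → Bool),
      {x : Vd d | (∀ i, |x i| ≤ (n : ℤ)) ∧ Trifurcation ω x} =
        ↑((boxF d n).filter (fun x => Trifurcation ω x)) := by
    intro n ω
    ext x
    simp only [Set.mem_setOf_eq, Finset.coe_filter, mem_boxF]
  have hint : ∀ n : ℕ,
      (∫⁻ ω, (Set.ncard {x : Vd d | (∀ i, |x i| ≤ (n : ℤ)) ∧ Trifurcation ω x} : ℝ≥0∞) ∂μ)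
        = ((boxF d n).card : ℝ≥0∞) * p₀ := by
    intro n
    have hpt : ∀ ω, (Set.ncard {x : Vd d | (∀ i, |x i| ≤ (n : ℤ)) ∧ Trifurcation ω x} : ℝ≥0∞)
        = ∑ x ∈ boxF d n,
            Set.indicator {ω' : Ed d → Bool | Trifurcation ω' x} (fun _ => (1 : ℝ≥0∞)) ω := by
      intro ω
      rw [hsetF n ω, Set.ncard_coe_finset, Finset.card_filter]
      push_cast
      apply Finset.sum_congr rfl
      intro x _
      by_cases h : Trifurcation ω x
      · simp [h, Set.indicator_apply]
      · simp [h, Set.indicator_apply]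
    rw [lintegral_congr hpt, lintegral_finset_sum]
    · have hterm : ∀ x ∈ boxF d n,
          (∫⁻ ω, Set.indicator {ω' : Ed d → Bool | Trifurcation ω' x}
            (fun _ => (1 : ℝ≥0∞)) ω ∂μ) = p₀ := by
        intro x _
        rw [lintegral_indicator (htrifmeas x)]
        simp only [MeasureTheory.lintegral_const, MeasureTheory.Measure.restrict_apply
          MeasurableSet.univ, Set.univ_inter, one_mul]
        exact htransx x
      rw [Finset.sum_congr rfl hterm, Finset.sum_const, nsmul_eq_mul]
    · intro x _
      exact measurable_const.indicator (htrifmeas x)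
  have hdetE : ∀ m : ℕ, ((boxF d m).card : ℝ≥0∞) * p₀
      ≤ (((2 * (m + 1) + 1) ^ d - (2 * m + 1) ^ d : ℕ) : ℝ≥0∞) := by
    intro m
    rw [← hint m]
    have hb : ∀ ω, (Set.ncard {x : Vd d | (∀ i, |x i| ≤ (m : ℤ)) ∧ Trifurcation ω x} : ℝ≥0∞)
        ≤ (((2 * (m + 1) + 1) ^ d - (2 * m + 1) ^ d : ℕ) : ℝ≥0∞) := by
      intro ω
      rw [hsetF m ω, Set.ncard_coe_finset]
      have h1 := det_bound ω m
      have h2 : (boxF d (m + 1) \ boxF d m).card = (2 * (m + 1) + 1) ^ d - (2 * m + 1) ^ d := by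
        rw [Finset.card_sdiff_of_subset (boxF_mono (Nat.le_succ m)), card_boxF, card_boxF]
      exact Nat.cast_le.mpr (h2 ▸ h1)
    calc (∫⁻ ω, (Set.ncard {x : Vd d | (∀ i, |x i| ≤ (m : ℤ)) ∧ Trifurcation ω x} : ℝ≥0∞) ∂μ)
        ≤ (∫⁻ _, (((2 * (m + 1) + 1) ^ d - (2 * m + 1) ^ d : ℕ) : ℝ≥0∞) ∂μ) :=
          MeasureTheory.lintegral_mono hb
      _ = (((2 * (m + 1) + 1) ^ d - (2 * m + 1) ^ d : ℕ) : ℝ≥0∞) := by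
          rw [MeasureTheory.lintegral_const, measure_univ, mul_one]
  have hp0 : p₀ = 0 := by
    have hptop : p₀ ≠ ⊤ := measure_ne_top μ _
    have hqle : ∀ m : ℕ, (2 * (m : ℝ) + 1) ^ d * p₀.toReal
        ≤ (2 * (m : ℝ) + 3) ^ d - (2 * (m : ℝ) + 1) ^ d := by
      intro m
      have h := hdetE m
      rw [card_boxF] at h
      have hR := ENNReal.toReal_mono (ENNReal.natCast_ne_top _) h
      rw [ENNReal.toReal_mul] at hR
      have hle : (2 * m + 1) ^ d ≤ (2 * (m + 1) + 1) ^ d :=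
        Nat.pow_le_pow_left (by omega) d
      have e1 : (((2 * m + 1) ^ d : ℕ) : ℝ≥0∞).toReal = (2 * (m : ℝ) + 1) ^ d := by
        rw [ENNReal.toReal_natCast]
        push_cast
        ring
      have e2 : (((2 * (m + 1) + 1) ^ d - (2 * m + 1) ^ d : ℕ) : ℝ≥0∞).toReal
          = (2 * (m : ℝ) + 3) ^ d - (2 * (m : ℝ) + 1) ^ d := by
        rw [ENNReal.toReal_natCast, Nat.cast_sub hle]
        push_cast
        ring
      rw [e1] at hR
      rw [e2] at hR
      exact hR
    have hq0 : p₀.toReal ≤ 0 := by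
      have hle2 : ∀ m : ℕ, p₀.toReal ≤ ((2 * (m : ℝ) + 3) / (2 * (m : ℝ) + 1)) ^ d - 1 := by
        intro m
        have hpos : (0 : ℝ) < (2 * (m : ℝ) + 1) ^ d := by positivity
        have heq : ((2 * (m : ℝ) + 3) / (2 * (m : ℝ) + 1)) ^ d - 1
            = ((2 * (m : ℝ) + 3) ^ d - (2 * (m : ℝ) + 1) ^ d) / (2 * (m : ℝ) + 1) ^ d := by
          rw [div_pow, sub_div, div_self (ne_of_gt hpos)]
        rw [heq, le_div_iff₀ hpos]
        have := hqle m
        linarith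
      exact ge_of_tendsto' (bk_ratio_tendsto d) hle2
    have hq0' : p₀.toReal = 0 := le_antisymm hq0 ENNReal.toReal_nonneg
    rcases (ENNReal.toReal_eq_zero_iff _).mp hq0' with h | h
    · exact h
    · exact absurd h hptop
  have hzero : ∀ n : ℕ,
      (∫⁻ ω, (Set.ncard {x : Vd d | (∀ i, |x i| ≤ (n : ℤ)) ∧ Trifurcation ω x} : ℝ≥0∞) ∂μ)
        = 0 := by
    intro n
    rw [hint n, hp0, mul_zero]
  constructor
  · intro n _
    rw [hzero n]
    exact zero_le
  · have heq : (fun n : ℕ =>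
        (∫⁻ ω, (Set.ncard {x : Vd d | (∀ i, |x i| ≤ (n : ℤ)) ∧ Trifurcation ω x} : ℝ≥0∞) ∂μ)
          / (((2 * n + 1) ^ d : ℕ) : ℝ≥0∞)) = fun _ => (0 : ℝ≥0∞) := by
      funext n
      rw [hzero n, ENNReal.zero_div]
    rw [heq]
    exact tendsto_const_nhds
end
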